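/- With the notation of the context, the identity v∘u − v′∘u′ = v′∘w − σ_P∘v′∘w∘σ_N holds as maps N₂(S) → P(S) for every finite set S if and only if all of the following hold: (a) α and ω commute with themselves and each other, i.e., for disjoint data in a finite set S: α^{S∖k}_{i,A}∘α^{S∖A}_{k,C} = α^{S∖i}_{k,C}∘α^{S∖C}_{i,A} whenever i ≠ k, A∩C = ∅, i ∉ A∪C, k ∉ A∪C; α^S_{i,A}∘ω^{S∖A}_C = ω^{S∖i}_C∘α^{S∖C}_{i,A} whenever A∩C = ∅ and i ∉ A∪C; and ω^T_C∘ω^{T∖C}_D = ω^T_D∘ω^{T∖D}_C for disjoint C,D ⊆ T; (b) for disjoint subsets A,B ⊆ S, j ∈ B and i ∈ S∖(A∪B): α^{S∖i}_{j,A}∘α^{S∖A}_{i,B} = α^{S∖j}_{i,(A∪B)∖j}; (c) for disjoint subsets A,B ⊆ S and j ∈ B: α^S_{j,A}∘ω^{S∖A}_B = ω^{S∖j}_{(A∪B)∖j}. (This characterizes when the data (α, ω) defines a representation of the curried Witt algebra on the standard FB-module.) -/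

import Mathlib

/-- An FB-module over `k`: a functor from the groupoid of finite sets (modelled as finite
subsets of `ℕ`) and bijections to `k`-modules.  A bijection `S → T` is encoded by a
function `f : ℕ → ℕ` that is injective on `S` with `S.image f = T`; the functor only
depends on the restriction of `f` to `S` (`map_congr`). -/
structure FBModule (k : Type) [CommRing k] where
  M : Finset ℕ → Type
  [acg : ∀ S, AddCommGroup (M S)]
  [mod : ∀ S, Module k (M S)]
  map : ∀ (f : ℕ → ℕ) (S T : Finset ℕ), Set.InjOn f S → S.image f = T → (M S →ₗ[k] M T)
  map_id : ∀ (S : Finset ℕ) (h1 : Set.InjOn id (S : Set ℕ)) (h2 : S.image id = S),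
    map id S S h1 h2 = LinearMap.id
  map_comp : ∀ (f g : ℕ → ℕ) (S T U : Finset ℕ) (h1 : Set.InjOn f S) (h2 : S.image f = T)
    (h3 : Set.InjOn g T) (h4 : T.image g = U) (h5 : Set.InjOn (g ∘ f) S)
    (h6 : S.image (g ∘ f) = U),
    map g T U h3 h4 ∘ₗ map f S T h1 h2 = map (g ∘ f) S U h5 h6
  map_congr : ∀ (f g : ℕ → ℕ) (S T : Finset ℕ) (h : ∀ x ∈ S, f x = g x)
    (h1 : Set.InjOn f S) (h2 : S.image f = T) (h3 : Set.InjOn g S) (h4 : S.image g = T),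
    map f S T h1 h2 = map g S T h3 h4

attribute [instance] FBModule.acg FBModule.mod

variable {k : Type} [CommRing k]

/-- The canonical identification `M(s) ≅ M(t)` for equal finite sets `s = t` (the action
of the identity bijection). -/
def FBModule.cast (N : FBModule k) {s t : Finset ℕ} (h : s = t) : N.M s →ₗ[k] N.M t :=
  N.map id s t (Set.injOn_id _) (by rwa [Finset.image_id])


section Helpers

lemma sdiff_sdiff_union' (S A B : Finset ℕ) : (S \ A) \ B = S \ (A ∪ B) := by
  ext x
  simp only [Finset.mem_sdiff, Finset.mem_union, not_or]
  tauto

lemma sdiff_sdiff_comm' (S A B : Finset ℕ) : (S \ A) \ B = (S \ B) \ A := by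
  ext x
  simp only [Finset.mem_sdiff]
  tauto

lemma sdiff_pair (S : Finset ℕ) (i j : ℕ) : S \ ({i, j} : Finset ℕ) = (S \ {i}) \ {j} := by
  ext x
  simp only [Finset.mem_sdiff, Finset.mem_insert, Finset.mem_singleton, not_or]
  tauto

lemma mem_sdiff_erase' (S B : Finset ℕ) (i : ℕ) (hiB : i ∈ B) :
    S \ B = (S \ {i}) \ (B \ {i}) := by
  ext x
  simp only [Finset.mem_sdiff, Finset.mem_singleton, not_and, not_not]
  constructor
  · rintro ⟨hx, hxB⟩
    exact ⟨⟨hx, fun h => hxB (h ▸ hiB)⟩, fun h => absurd h hxB⟩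
  · rintro ⟨⟨hx, hxi⟩, h⟩
    refine ⟨hx, fun hxB => hxi (h hxB)⟩

end Helpers

namespace Stmt16

variable {k : Type} [CommRing k] (N : FBModule k)

/-- Index set for `N₂(S)`: ordered pairs `(A, B)` of disjoint subsets of `S`. -/
def ιN2 (S : Finset ℕ) : Type :=
  {p : Finset ℕ × Finset ℕ // p.1 ⊆ S ∧ p.2 ⊆ S ∧ Disjoint p.1 p.2}

/-- Index set for `P₁(S)`: pairs `(A, i)` with `A ⊆ S`, `i ∈ S∖A`. -/
def ιP1 (S : Finset ℕ) : Type :=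
  {q : Finset ℕ × ℕ // q.1 ⊆ S ∧ q.2 ∈ S ∧ q.2 ∉ q.1}

/-- Index set for `P₁′(S)`: pairs `(j, B)` with `j ∈ S`, `B ⊆ S∖{j}`. -/
def ιP1' (S : Finset ℕ) : Type :=
  {q : ℕ × Finset ℕ // q.1 ∈ S ∧ q.2 ⊆ S ∧ q.1 ∉ q.2}

/-- Index set for `P(S)`: ordered pairs of distinct elements of `S`. -/
def ιP (S : Finset ℕ) : Type := {p : ℕ × ℕ // p.1 ∈ S ∧ p.2 ∈ S ∧ p.1 ≠ p.2}

instance (S : Finset ℕ) : DecidableEq (ιN2 S) := fun _ _ =>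
  decidable_of_iff _ Subtype.ext_iff.symm
instance (S : Finset ℕ) : DecidableEq (ιP1 S) := fun _ _ =>
  decidable_of_iff _ Subtype.ext_iff.symm
instance (S : Finset ℕ) : DecidableEq (ιP1' S) := fun _ _ =>
  decidable_of_iff _ Subtype.ext_iff.symm
instance (S : Finset ℕ) : DecidableEq (ιP S) := fun _ _ =>
  decidable_of_iff _ Subtype.ext_iff.symm

/-- `N₂(S) = ⊕_{(A,B)} M(S∖(A∪B))` over ordered pairs of disjoint subsets of `S`,
realizing `(Sym V ⊗ Sym V ⊗ M)(S)`. -/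
def N2 (S : Finset ℕ) : Type :=
  DirectSum (ιN2 S) (fun p => N.M (S \ (p.1.1 ∪ p.1.2)))

/-- `P₁(S) = ⊕_{(A,i)} M(S∖(A∪{i}))`, realizing `(Sym V ⊗ V ⊗ M)(S)`. -/
def P1 (S : Finset ℕ) : Type :=
  DirectSum (ιP1 S) (fun q => N.M (S \ (q.1.1 ∪ {q.1.2})))

/-- `P₁′(S) = ⊕_{(j,B)} M(S∖({j}∪B))`, realizing `(V ⊗ Sym V ⊗ M)(S)`. -/
def P1' (S : Finset ℕ) : Type :=
  DirectSum (ιP1' S) (fun q => N.M (S \ ({q.1.1} ∪ q.1.2)))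

/-- `P(S) = ⊕_{(i,j)} M(S∖{i,j})`, realizing `(V ⊗ V ⊗ M)(S)`. -/
def PP (S : Finset ℕ) : Type := DirectSum (ιP S) (fun p => N.M (S \ {p.1.1, p.1.2}))

instance (S : Finset ℕ) : AddCommGroup (N2 N S) := by unfold N2; infer_instance
instance (S : Finset ℕ) : Module k (N2 N S) := by unfold N2; infer_instance
instance (S : Finset ℕ) : AddCommGroup (P1 N S) := by unfold P1; infer_instance
instance (S : Finset ℕ) : Module k (P1 N S) := by unfold P1; infer_instance
instance (S : Finset ℕ) : AddCommGroup (P1' N S) := by unfold P1'; infer_instance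
instance (S : Finset ℕ) : Module k (P1' N S) := by unfold P1'; infer_instance
instance (S : Finset ℕ) : AddCommGroup (PP N S) := by unfold PP; infer_instance
instance (S : Finset ℕ) : Module k (PP N S) := by unfold PP; infer_instance

variable (φ : ∀ (S : Finset ℕ) (i : ℕ) (B : Finset ℕ), i ∈ S → B ⊆ S →
  (N.M (S \ B) →ₗ[k] N.M (S \ {i})))

/-- `u : N₂(S) → P₁(S)` with `(A,B) → (A,i)`-component `φ^{S∖A}_{i,B}`. -/
noncomputable def uMap (S : Finset ℕ) : N2 N S →ₗ[k] P1 N S :=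
  DirectSum.toModule k (ιN2 S) (P1 N S) (fun p =>
    ∑ i ∈ (S \ p.1.1).attach,
      (DirectSum.lof k (ιP1 S) (fun q => N.M (S \ (q.1.1 ∪ {q.1.2})))
          ⟨(p.1.1, i.1),
            ⟨p.2.1, (Finset.mem_sdiff.mp i.2).1, (Finset.mem_sdiff.mp i.2).2⟩⟩) ∘ₗ
        N.cast (sdiff_sdiff_union' S p.1.1 {i.1}) ∘ₗ
        φ (S \ p.1.1) i.1 p.1.2 i.2
          (Finset.subset_sdiff.mpr ⟨p.2.2.1, p.2.2.2.symm⟩) ∘ₗ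
        N.cast (sdiff_sdiff_union' S p.1.1 p.1.2).symm)

/-- `v : P₁(S) → P(S)` with `(A,i) → (j,i)`-component `φ^{S∖i}_{j,A}`. -/
noncomputable def vMap (S : Finset ℕ) : P1 N S →ₗ[k] PP N S :=
  DirectSum.toModule k (ιP1 S) (PP N S) (fun q =>
    ∑ j ∈ (S \ {q.1.2}).attach,
      (DirectSum.lof k (ιP S) (fun p => N.M (S \ {p.1.1, p.1.2}))
          ⟨(j.1, q.1.2),
            ⟨(Finset.mem_sdiff.mp j.2).1, q.2.2.1,
              fun h => (Finset.mem_sdiff.mp j.2).2 (Finset.mem_singleton.mpr h)⟩⟩) ∘ₗ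
        N.cast ((sdiff_sdiff_comm' S {q.1.2} {j.1}).trans (sdiff_pair S j.1 q.1.2).symm) ∘ₗ
        φ (S \ {q.1.2}) j.1 q.1.1 j.2
          (Finset.subset_sdiff.mpr
            ⟨q.2.1, Finset.disjoint_singleton_right.mpr q.2.2.2⟩) ∘ₗ
        N.cast (show S \ (q.1.1 ∪ {q.1.2}) = (S \ {q.1.2}) \ q.1.1 by
          rw [sdiff_sdiff_union', Finset.union_comm]))

/-- `u′ : N₂(S) → P₁′(S)` with `(A,B) → (j,B)`-component `φ^{S∖B}_{j,A}`. -/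
noncomputable def u'Map (S : Finset ℕ) : N2 N S →ₗ[k] P1' N S :=
  DirectSum.toModule k (ιN2 S) (P1' N S) (fun p =>
    ∑ j ∈ (S \ p.1.2).attach,
      (DirectSum.lof k (ιP1' S) (fun q => N.M (S \ ({q.1.1} ∪ q.1.2)))
          ⟨(j.1, p.1.2),
            ⟨(Finset.mem_sdiff.mp j.2).1, p.2.2.1, (Finset.mem_sdiff.mp j.2).2⟩⟩) ∘ₗ
        N.cast ((sdiff_sdiff_comm' S p.1.2 {j.1}).trans
          (sdiff_sdiff_union' S {j.1} p.1.2)) ∘ₗ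
        φ (S \ p.1.2) j.1 p.1.1 j.2
          (Finset.subset_sdiff.mpr ⟨p.2.1, p.2.2.2⟩) ∘ₗ
        N.cast (show S \ (p.1.1 ∪ p.1.2) = (S \ p.1.2) \ p.1.1 by
          rw [sdiff_sdiff_union', Finset.union_comm]))

/-- `v′ : P₁′(S) → P(S)` with `(j,B) → (j,i)`-component `φ^{S∖j}_{i,B}`. -/
noncomputable def v'Map (S : Finset ℕ) : P1' N S →ₗ[k] PP N S :=
  DirectSum.toModule k (ιP1' S) (PP N S) (fun q =>
    ∑ i ∈ (S \ {q.1.1}).attach,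
      (DirectSum.lof k (ιP S) (fun p => N.M (S \ {p.1.1, p.1.2}))
          ⟨(q.1.1, i.1),
            ⟨q.2.1, (Finset.mem_sdiff.mp i.2).1,
              fun h => (Finset.mem_sdiff.mp i.2).2
                (Finset.mem_singleton.mpr h.symm)⟩⟩) ∘ₗ
        N.cast (sdiff_pair S q.1.1 i.1).symm ∘ₗ
        φ (S \ {q.1.1}) i.1 q.1.2 i.2
          (Finset.subset_sdiff.mpr
            ⟨q.2.2.1, Finset.disjoint_singleton_right.mpr q.2.2.2⟩) ∘ₗ
        N.cast (sdiff_sdiff_union' S {q.1.1} q.1.2).symm)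

/-- `w : N₂(S) → P₁′(S)` with `(A,B) → (j, (A∪B)∖{j})`-component the canonical
identification of `M(S∖(A∪B))`, for each `j ∈ B`. -/
noncomputable def wMap (S : Finset ℕ) : N2 N S →ₗ[k] P1' N S :=
  DirectSum.toModule k (ιN2 S) (P1' N S) (fun p =>
    ∑ j ∈ p.1.2.attach,
      (DirectSum.lof k (ιP1' S) (fun q => N.M (S \ ({q.1.1} ∪ q.1.2)))
          ⟨(j.1, (p.1.1 ∪ p.1.2) \ {j.1}),
            ⟨p.2.2.1 j.2,
              Finset.sdiff_subset.trans (Finset.union_subset p.2.1 p.2.2.1),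
              by simp⟩⟩) ∘ₗ
        N.cast (show S \ (p.1.1 ∪ p.1.2) =
            S \ ({j.1} ∪ ((p.1.1 ∪ p.1.2) \ {j.1})) by
          ext x
          have hx : x = j.1 → x ∈ p.1.2 := fun h => h ▸ j.2
          simp only [Finset.mem_sdiff, Finset.mem_union, Finset.mem_singleton, not_or,
            not_and, not_not]
          tauto))

/-- `σ_N : N₂(S) → N₂(S)` carries the `(A,B)`-component identically to the
`(B,A)`-component. -/
noncomputable def σN (S : Finset ℕ) : N2 N S →ₗ[k] N2 N S :=
  DirectSum.toModule k (ιN2 S) (N2 N S) (fun p =>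
    (DirectSum.lof k (ιN2 S) (fun q => N.M (S \ (q.1.1 ∪ q.1.2)))
        ⟨(p.1.2, p.1.1), ⟨p.2.2.1, p.2.1, p.2.2.2.symm⟩⟩) ∘ₗ
      N.cast (by rw [Finset.union_comm]))

/-- `σ_P : P(S) → P(S)` carries the `(i,j)`-component identically to the
`(j,i)`-component. -/
noncomputable def σP (S : Finset ℕ) : PP N S →ₗ[k] PP N S :=
  DirectSum.toModule k (ιP S) (PP N S) (fun p =>
    (DirectSum.lof k (ιP S) (fun q => N.M (S \ {q.1.1, q.1.2}))
        ⟨(p.1.2, p.1.1), ⟨p.2.2.1, p.2.1, p.2.2.2.symm⟩⟩) ∘ₗ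
      N.cast (by rw [Finset.pair_comm]))

end Stmt16

namespace Stmt16

variable {k : Type} [CommRing k] (N : FBModule k)

/-- Condition (a), first part: `α` commutes with itself. -/
def CondA1 (α : ∀ (S : Finset ℕ) (i : ℕ) (A : Finset ℕ), i ∈ S → A ⊆ S → i ∉ A →
    (N.M (S \ A) →ₗ[k] N.M (S \ {i}))) : Prop :=
  ∀ (S : Finset ℕ) (i kk : ℕ) (A C : Finset ℕ) (hi : i ∈ S) (hk : kk ∈ S)
    (hik : i ≠ kk) (hA : A ⊆ S) (hC : C ⊆ S) (hAC : Disjoint A C)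
    (hiA : i ∉ A) (hiC : i ∉ C) (hkA : kk ∉ A) (hkC : kk ∉ C),
    α (S \ {kk}) i A (Finset.mem_sdiff.mpr ⟨hi, by simp [hik]⟩)
        (Finset.subset_sdiff.mpr ⟨hA, Finset.disjoint_singleton_right.mpr hkA⟩) hiA ∘ₗ
      N.cast (sdiff_sdiff_comm' S A {kk}) ∘ₗ
      α (S \ A) kk C (Finset.mem_sdiff.mpr ⟨hk, hkA⟩)
        (Finset.subset_sdiff.mpr ⟨hC, hAC.symm⟩) hkC =
    N.cast (sdiff_sdiff_comm' S {i} {kk}) ∘ₗ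
      α (S \ {i}) kk C (Finset.mem_sdiff.mpr ⟨hk, by simp [hik.symm]⟩)
        (Finset.subset_sdiff.mpr ⟨hC, Finset.disjoint_singleton_right.mpr hiC⟩) hkC ∘ₗ
      N.cast (sdiff_sdiff_comm' S C {i}) ∘ₗ
      α (S \ C) i A (Finset.mem_sdiff.mpr ⟨hi, hiC⟩)
        (Finset.subset_sdiff.mpr ⟨hA, hAC⟩) hiA ∘ₗ
      N.cast (sdiff_sdiff_comm' S A C)

/-- Condition (a), second part: `α` and `ω` commute. -/
def CondA2 (α : ∀ (S : Finset ℕ) (i : ℕ) (A : Finset ℕ), i ∈ S → A ⊆ S → i ∉ A →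
      (N.M (S \ A) →ₗ[k] N.M (S \ {i})))
    (ω : ∀ (T C : Finset ℕ), C ⊆ T → (N.M (T \ C) →ₗ[k] N.M T)) : Prop :=
  ∀ (S : Finset ℕ) (i : ℕ) (A C : Finset ℕ) (hi : i ∈ S) (hA : A ⊆ S) (hC : C ⊆ S)
    (hAC : Disjoint A C) (hiA : i ∉ A) (hiC : i ∉ C),
    α S i A hi hA hiA ∘ₗ
      ω (S \ A) C (Finset.subset_sdiff.mpr ⟨hC, hAC.symm⟩) =
    ω (S \ {i}) C (Finset.subset_sdiff.mpr ⟨hC, Finset.disjoint_singleton_right.mpr hiC⟩) ∘ₗ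
      N.cast (sdiff_sdiff_comm' S C {i}) ∘ₗ
      α (S \ C) i A (Finset.mem_sdiff.mpr ⟨hi, hiC⟩)
        (Finset.subset_sdiff.mpr ⟨hA, hAC⟩) hiA ∘ₗ
      N.cast (sdiff_sdiff_comm' S A C)

/-- Condition (a), third part: `ω` commutes with itself. -/
def CondA3 (ω : ∀ (T C : Finset ℕ), C ⊆ T → (N.M (T \ C) →ₗ[k] N.M T)) : Prop :=
  ∀ (T C D : Finset ℕ) (hC : C ⊆ T) (hD : D ⊆ T) (hCD : Disjoint C D),
    ω T C hC ∘ₗ ω (T \ C) D (Finset.subset_sdiff.mpr ⟨hD, hCD.symm⟩) =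
    ω T D hD ∘ₗ ω (T \ D) C (Finset.subset_sdiff.mpr ⟨hC, hCD⟩) ∘ₗ
      N.cast (sdiff_sdiff_comm' T C D)

/-- Condition (b): `α^{S∖i}_{j,A} ∘ α^{S∖A}_{i,B} = α^{S∖j}_{i,(A∪B)∖j}` for disjoint
`A, B ⊆ S`, `j ∈ B` and `i ∈ S∖(A∪B)`. -/
def CondBc (α : ∀ (S : Finset ℕ) (i : ℕ) (A : Finset ℕ), i ∈ S → A ⊆ S → i ∉ A →
    (N.M (S \ A) →ₗ[k] N.M (S \ {i}))) : Prop :=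
  ∀ (S : Finset ℕ) (A B : Finset ℕ) (j i : ℕ) (hA : A ⊆ S) (hB : B ⊆ S)
    (hAB : Disjoint A B) (hjB : j ∈ B) (hiS : i ∈ S) (hiA : i ∉ A) (hiB : i ∉ B),
    α (S \ {i}) j A
        (Finset.mem_sdiff.mpr ⟨hB hjB,
          Finset.notMem_singleton.mpr (fun h => hiB (by rw [← h]; exact hjB))⟩)
        (Finset.subset_sdiff.mpr ⟨hA, Finset.disjoint_singleton_right.mpr hiA⟩)
        (Finset.disjoint_right.mp hAB hjB) ∘ₗ
      N.cast (sdiff_sdiff_comm' S A {i}) ∘ₗ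
      α (S \ A) i B (Finset.mem_sdiff.mpr ⟨hiS, hiA⟩)
        (Finset.subset_sdiff.mpr ⟨hB, hAB.symm⟩) hiB =
    N.cast (sdiff_sdiff_comm' S {j} {i}) ∘ₗ
      α (S \ {j}) i ((A ∪ B) \ {j})
        (Finset.mem_sdiff.mpr ⟨hiS,
          Finset.notMem_singleton.mpr (fun h => hiB (by rw [h]; exact hjB))⟩)
        (Finset.sdiff_subset_sdiff (Finset.union_subset hA hB) (Finset.Subset.refl _))
        (by simp [hiA, hiB]) ∘ₗ
      N.cast ((sdiff_sdiff_union' S A B).trans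
        (mem_sdiff_erase' S (A ∪ B) j (Finset.mem_union_right A hjB)))

/-- Condition (c): `α^S_{j,A} ∘ ω^{S∖A}_B = ω^{S∖j}_{(A∪B)∖j}` for disjoint `A, B ⊆ S`
and `j ∈ B`. -/
def CondCc (α : ∀ (S : Finset ℕ) (i : ℕ) (A : Finset ℕ), i ∈ S → A ⊆ S → i ∉ A →
      (N.M (S \ A) →ₗ[k] N.M (S \ {i})))
    (ω : ∀ (T C : Finset ℕ), C ⊆ T → (N.M (T \ C) →ₗ[k] N.M T)) : Prop :=
  ∀ (S : Finset ℕ) (A B : Finset ℕ) (j : ℕ) (hA : A ⊆ S) (hB : B ⊆ S)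
    (hAB : Disjoint A B) (hjB : j ∈ B),
    α S j A (hB hjB) hA (Finset.disjoint_right.mp hAB hjB) ∘ₗ
      ω (S \ A) B (Finset.subset_sdiff.mpr ⟨hB, hAB.symm⟩) =
    ω (S \ {j}) ((A ∪ B) \ {j})
        (Finset.sdiff_subset_sdiff (Finset.union_subset hA hB) (Finset.Subset.refl _)) ∘ₗ
      N.cast ((sdiff_sdiff_union' S A B).trans
        (mem_sdiff_erase' S (A ∪ B) j (Finset.mem_union_right A hjB)))

section CastTools
variable {k : Type} [CommRing k] (N : FBModule k)

lemma FBModule.cast_cast {s t u : Finset ℕ} (h1 : s = t) (h2 : t = u) :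
    N.cast h2 ∘ₗ N.cast h1 = N.cast (h1.trans h2) := by
  unfold FBModule.cast
  rw [N.map_comp id id s t u _ _ _ _ (Set.injOn_id _) (by simp [h1, h2])]
  exact N.map_congr _ _ _ _ (fun x _ => rfl) _ _ _ _

lemma FBModule.cast_rfl {s : Finset ℕ} (h : s = s) : N.cast h = LinearMap.id :=
  N.map_id s _ _

lemma FBModule.cast_cast_apply {s t u : Finset ℕ} (h1 : s = t) (h2 : t = u) (x : N.M s) :
    N.cast h2 (N.cast h1 x) = N.cast (h1.trans h2) x := by
  rw [← FBModule.cast_cast N h1 h2]; rfl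

def MEq {s s' t t' : Finset ℕ} (_hs : s = s') (_ht : t = t')
    (f : N.M s →ₗ[k] N.M t) (g : N.M s' →ₗ[k] N.M t') : Prop :=
  g ∘ₗ N.cast _hs = N.cast _ht ∘ₗ f

namespace MEq
variable {N}

lemma refl {s t : Finset ℕ} (hs : s = s) (ht : t = t) (f : N.M s →ₗ[k] N.M t) :
    MEq N hs ht f f := by
  unfold MEq; rw [FBModule.cast_rfl, FBModule.cast_rfl]; simp

lemma of_eq {s t : Finset ℕ} (hs : s = s) (ht : t = t) {f g : N.M s →ₗ[k] N.M t}
    (h : f = g) : MEq N hs ht f g := h ▸ refl hs ht f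

lemma comp {s s' m m' t t' : Finset ℕ} {hs : s = s'} {hm : m = m'} {ht : t = t'}
    {f : N.M s →ₗ[k] N.M m} {g : N.M s' →ₗ[k] N.M m'}
    {f' : N.M m →ₗ[k] N.M t} {g' : N.M m' →ₗ[k] N.M t'}
    (h1 : MEq N hs hm f g) (h2 : MEq N hm ht f' g') :
    MEq N hs ht (f' ∘ₗ f) (g' ∘ₗ g) := by
  unfold MEq at *
  calc (g' ∘ₗ g) ∘ₗ N.cast hs = g' ∘ₗ (g ∘ₗ N.cast hs) := by rw [LinearMap.comp_assoc]
    _ = (g' ∘ₗ N.cast hm) ∘ₗ f := by rw [h1, LinearMap.comp_assoc]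
    _ = N.cast ht ∘ₗ (f' ∘ₗ f) := by rw [h2, LinearMap.comp_assoc]

lemma cast {s s' t t' : Finset ℕ} (hs : s = s') (ht : t = t') (h : s = t) (h' : s' = t') :
    MEq N hs ht (N.cast h) (N.cast h') := by
  unfold MEq
  rw [FBModule.cast_cast, FBModule.cast_cast]

lemma unique {s s' t t' : Finset ℕ} {hs : s = s'} {ht : t = t'}
    {f : N.M s →ₗ[k] N.M t} {g g' : N.M s' →ₗ[k] N.M t'}
    (h1 : MEq N hs ht f g) (h2 : MEq N hs ht f g') : g = g' := by
  unfold MEq at h1 h2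
  have h3 : g ∘ₗ N.cast hs ∘ₗ N.cast hs.symm = g' ∘ₗ N.cast hs ∘ₗ N.cast hs.symm := by
    rw [← LinearMap.comp_assoc, ← LinearMap.comp_assoc, h1, h2]
  rwa [FBModule.cast_cast, FBModule.cast_rfl, LinearMap.comp_id, LinearMap.comp_id] at h3

lemma symm {s s' t t' : Finset ℕ} {hs : s = s'} {ht : t = t'}
    {f : N.M s →ₗ[k] N.M t} {g : N.M s' →ₗ[k] N.M t'}
    (h1 : MEq N hs ht f g) : MEq N hs.symm ht.symm g f := by
  unfold MEq at *
  have := congrArg (fun z => N.cast ht.symm ∘ₗ z ∘ₗ N.cast hs.symm) h1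
  simp only [LinearMap.comp_assoc] at this
  rw [FBModule.cast_cast] at this
  simp only [← LinearMap.comp_assoc] at this
  rw [FBModule.cast_cast] at this
  rw [FBModule.cast_rfl, FBModule.cast_rfl, LinearMap.comp_id, LinearMap.id_comp] at this
  exact this.symm

/-- conjugation formula -/
lemma conj {s s' t t' : Finset ℕ} {hs : s = s'} {ht : t = t'}
    {f : N.M s →ₗ[k] N.M t} {g : N.M s' →ₗ[k] N.M t'}
    (h1 : MEq N hs ht f g) : g = N.cast ht ∘ₗ f ∘ₗ N.cast hs.symm := by
  refine unique h1 ?_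
  unfold MEq
  rw [LinearMap.comp_assoc, LinearMap.comp_assoc, FBModule.cast_cast, FBModule.cast_rfl,
    LinearMap.comp_id]

end MEq

variable {N}

/-- congruence for a (1,*)-type family such as `φ` or partially applied `α`. -/
lemma MEq.phi (ψ : ∀ (S : Finset ℕ) (i : ℕ) (B : Finset ℕ), i ∈ S → B ⊆ S →
      (N.M (S \ B) →ₗ[k] N.M (S \ {i})))
    {S S' B B' : Finset ℕ} {i : ℕ} (hS : S = S') (hB : B = B')
    (hs : S \ B = S' \ B') (ht : S \ {i} = S' \ {i})
    (p1 : i ∈ S) (p2 : B ⊆ S) (q1 : i ∈ S') (q2 : B' ⊆ S') :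
    MEq N hs ht (ψ S i B p1 p2) (ψ S' i B' q1 q2) := by
  subst hS; subst hB; exact MEq.refl hs ht _

/-- congruence for a (0,*)-type family such as `ω`. -/
lemma MEq.omega (ω : ∀ (T C : Finset ℕ), C ⊆ T → (N.M (T \ C) →ₗ[k] N.M T))
    {T T' C C' : Finset ℕ} (hT : T = T') (hC : C = C')
    (hs : T \ C = T' \ C') (p : C ⊆ T) (q : C' ⊆ T') :
    MEq N hs hT (ω T C p) (ω T' C' q) := by
  subst hT; subst hC; exact MEq.refl hs rfl _

end CastTools


section KeyDefs
variable {k : Type} [CommRing k] (N : FBModule k)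
variable (φ : ∀ (S : Finset ℕ) (i : ℕ) (B : Finset ℕ), i ∈ S → B ⊆ S →
  (N.M (S \ B) →ₗ[k] N.M (S \ {i})))
variable (S A B : Finset ℕ) (j i : ℕ)

/-- the `v∘u` contribution to component `(j,i)` from generator `(A,B)`. -/
def t1 (hA : A ⊆ S) (hB : B ⊆ S) (hd : Disjoint A B) (hj : j ∈ S) (hi : i ∈ S)
    (hji : j ≠ i) (h : i ∉ A) : N.M (S \ (A ∪ B)) →ₗ[k] N.M (S \ {j, i}) :=
  N.cast ((sdiff_sdiff_comm' S {i} {j}).trans (sdiff_pair S j i).symm) ∘ₗ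
    φ (S \ {i}) j A (Finset.mem_sdiff.mpr ⟨hj, by simp [hji]⟩)
      (Finset.subset_sdiff.mpr ⟨hA, Finset.disjoint_singleton_right.mpr h⟩) ∘ₗ
    N.cast (sdiff_sdiff_comm' S A {i}) ∘ₗ
    φ (S \ A) i B (Finset.mem_sdiff.mpr ⟨hi, h⟩)
      (Finset.subset_sdiff.mpr ⟨hB, hd.symm⟩) ∘ₗ
    N.cast (sdiff_sdiff_union' S A B).symm

/-- the `v′∘u′` contribution to component `(j,i)` from generator `(A,B)`. -/
def t2 (hA : A ⊆ S) (hB : B ⊆ S) (hd : Disjoint A B) (hj : j ∈ S) (hi : i ∈ S)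
    (hji : j ≠ i) (h : j ∉ B) : N.M (S \ (A ∪ B)) →ₗ[k] N.M (S \ {j, i}) :=
  N.cast (sdiff_pair S j i).symm ∘ₗ
    φ (S \ {j}) i B (Finset.mem_sdiff.mpr ⟨hi, by simp [Ne.symm hji]⟩)
      (Finset.subset_sdiff.mpr ⟨hB, Finset.disjoint_singleton_right.mpr h⟩) ∘ₗ
    N.cast (sdiff_sdiff_comm' S B {j}) ∘ₗ
    φ (S \ B) j A (Finset.mem_sdiff.mpr ⟨hj, h⟩)
      (Finset.subset_sdiff.mpr ⟨hA, hd⟩) ∘ₗ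
    N.cast (show S \ (A ∪ B) = (S \ B) \ A by rw [sdiff_sdiff_union', Finset.union_comm])

/-- the `v′∘w` contribution to component `(j,i)` from generator `(A,B)`. -/
def t3 (hA : A ⊆ S) (hB : B ⊆ S) (hd : Disjoint A B) (hj : j ∈ S) (hi : i ∈ S)
    (hji : j ≠ i) (h : j ∈ B) : N.M (S \ (A ∪ B)) →ₗ[k] N.M (S \ {j, i}) :=
  N.cast (sdiff_pair S j i).symm ∘ₗ
    φ (S \ {j}) i ((A ∪ B) \ {j}) (Finset.mem_sdiff.mpr ⟨hi, by simp [Ne.symm hji]⟩)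
      (Finset.sdiff_subset_sdiff (Finset.union_subset hA hB) (Finset.Subset.refl _)) ∘ₗ
    N.cast (show S \ (A ∪ B) = (S \ {j}) \ ((A ∪ B) \ {j}) by
      have hj' : j ∈ A ∪ B := Finset.mem_union_right A h
      ext x
      simp only [Finset.mem_sdiff, Finset.mem_singleton, not_and, not_not]
      constructor
      · rintro ⟨hx, hxAB⟩
        exact ⟨⟨hx, fun hh => hxAB (hh ▸ hj')⟩, fun hh => absurd hh hxAB⟩
      · rintro ⟨⟨hx, hxj⟩, hh⟩
        exact ⟨hx, fun hxAB => hxj (hh hxAB)⟩)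

/-- the `σ_P∘v′∘w∘σ_N` contribution to component `(j,i)` from generator `(A,B)`. -/
def t4 (hA : A ⊆ S) (hB : B ⊆ S) (hd : Disjoint A B) (hj : j ∈ S) (hi : i ∈ S)
    (hji : j ≠ i) (h : i ∈ A) : N.M (S \ (A ∪ B)) →ₗ[k] N.M (S \ {j, i}) :=
  N.cast ((sdiff_pair S i j).symm.trans (by rw [Finset.pair_comm])) ∘ₗ
    φ (S \ {i}) j ((B ∪ A) \ {i}) (Finset.mem_sdiff.mpr ⟨hj, by simp [hji]⟩)
      (Finset.sdiff_subset_sdiff (Finset.union_subset hB hA) (Finset.Subset.refl _)) ∘ₗ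
    N.cast (show S \ (A ∪ B) = (S \ {i}) \ ((B ∪ A) \ {i}) by
      ext x
      have hx : x = i → x ∈ A := fun hh => hh ▸ h
      simp only [Finset.mem_sdiff, Finset.mem_union, Finset.mem_singleton, not_and,
        not_not, not_or]
      tauto)

/-- the total `(j,i)`-component of `(v∘u − v′∘u′ − v′∘w + σ_P∘v′∘w∘σ_N)(lof (A,B) ·)`. -/
def keyT (hA : A ⊆ S) (hB : B ⊆ S) (hd : Disjoint A B) (hj : j ∈ S) (hi : i ∈ S)
    (hji : j ≠ i) : N.M (S \ (A ∪ B)) →ₗ[k] N.M (S \ {j, i}) :=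
  (if h : i ∈ A then 0 else t1 N φ S A B j i hA hB hd hj hi hji h) -
  (if h : j ∈ B then 0 else t2 N φ S A B j i hA hB hd hj hi hji h) -
  (if h : j ∈ B then t3 N φ S A B j i hA hB hd hj hi hji h else 0) +
  (if h : i ∈ A then t4 N φ S A B j i hA hB hd hj hi hji h else 0)

end KeyDefs


section ApplyLems
variable {k : Type} [CommRing k] (N : FBModule k)
variable (φ : ∀ (S : Finset ℕ) (i : ℕ) (B : Finset ℕ), i ∈ S → B ⊆ S →
  (N.M (S \ B) →ₗ[k] N.M (S \ {i})))
variable (S : Finset ℕ)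

lemma uMap_lof (A B : Finset ℕ) (hAS : A ⊆ S) (hBS : B ⊆ S) (hd : Disjoint A B)
    (x : N.M (S \ (A ∪ B))) :
    uMap N φ S (DirectSum.lof k (ιN2 S) (fun p => N.M (S \ (p.1.1 ∪ p.1.2)))
      ⟨(A, B), hAS, hBS, hd⟩ x) =
    ∑ i' ∈ (S \ A).attach,
      DirectSum.lof k (ιP1 S) (fun q => N.M (S \ (q.1.1 ∪ {q.1.2})))
        ⟨(A, i'.1), hAS, (Finset.mem_sdiff.mp i'.2).1, (Finset.mem_sdiff.mp i'.2).2⟩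
        (N.cast (sdiff_sdiff_union' S A {i'.1})
          (φ (S \ A) i'.1 B i'.2 (Finset.subset_sdiff.mpr ⟨hBS, hd.symm⟩)
            (N.cast (sdiff_sdiff_union' S A B).symm x))) := by
  rw [uMap]
  erw [DirectSum.toModule_lof]
  rw [LinearMap.sum_apply]
  simp only [LinearMap.comp_apply]
  rfl

lemma vMap_lof (A : Finset ℕ) (i : ℕ) (h1 : A ⊆ S) (h2 : i ∈ S) (h3 : i ∉ A)
    (y : N.M (S \ (A ∪ {i}))) :
    vMap N φ S (DirectSum.lof k (ιP1 S) (fun q => N.M (S \ (q.1.1 ∪ {q.1.2})))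
      ⟨(A, i), h1, h2, h3⟩ y) =
    ∑ j' ∈ (S \ {i}).attach,
      DirectSum.lof k (ιP S) (fun p => N.M (S \ {p.1.1, p.1.2}))
        ⟨(j'.1, i), (Finset.mem_sdiff.mp j'.2).1, h2,
          fun h => (Finset.mem_sdiff.mp j'.2).2 (Finset.mem_singleton.mpr h)⟩
        (N.cast ((sdiff_sdiff_comm' S {i} {j'.1}).trans (sdiff_pair S j'.1 i).symm)
          (φ (S \ {i}) j'.1 A j'.2
            (Finset.subset_sdiff.mpr ⟨h1, Finset.disjoint_singleton_right.mpr h3⟩)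
            (N.cast (show S \ (A ∪ {i}) = (S \ {i}) \ A by
              rw [sdiff_sdiff_union', Finset.union_comm]) y))) := by
  rw [vMap]
  erw [DirectSum.toModule_lof]
  rw [LinearMap.sum_apply]
  simp only [LinearMap.comp_apply]
  rfl

lemma u'Map_lof (A B : Finset ℕ) (hAS : A ⊆ S) (hBS : B ⊆ S) (hd : Disjoint A B)
    (x : N.M (S \ (A ∪ B))) :
    u'Map N φ S (DirectSum.lof k (ιN2 S) (fun p => N.M (S \ (p.1.1 ∪ p.1.2)))
      ⟨(A, B), hAS, hBS, hd⟩ x) =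
    ∑ j' ∈ (S \ B).attach,
      DirectSum.lof k (ιP1' S) (fun q => N.M (S \ ({q.1.1} ∪ q.1.2)))
        ⟨(j'.1, B), (Finset.mem_sdiff.mp j'.2).1, hBS, (Finset.mem_sdiff.mp j'.2).2⟩
        (N.cast ((sdiff_sdiff_comm' S B {j'.1}).trans (sdiff_sdiff_union' S {j'.1} B))
          (φ (S \ B) j'.1 A j'.2 (Finset.subset_sdiff.mpr ⟨hAS, hd⟩)
            (N.cast (show S \ (A ∪ B) = (S \ B) \ A by
              rw [sdiff_sdiff_union', Finset.union_comm]) x))) := by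
  rw [u'Map]
  erw [DirectSum.toModule_lof]
  rw [LinearMap.sum_apply]
  simp only [LinearMap.comp_apply]
  rfl

lemma v'Map_lof (j : ℕ) (B : Finset ℕ) (h1 : j ∈ S) (h2 : B ⊆ S) (h3 : j ∉ B)
    (y : N.M (S \ ({j} ∪ B))) :
    v'Map N φ S (DirectSum.lof k (ιP1' S) (fun q => N.M (S \ ({q.1.1} ∪ q.1.2)))
      ⟨(j, B), h1, h2, h3⟩ y) =
    ∑ i' ∈ (S \ {j}).attach,
      DirectSum.lof k (ιP S) (fun p => N.M (S \ {p.1.1, p.1.2}))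
        ⟨(j, i'.1), h1, (Finset.mem_sdiff.mp i'.2).1,
          fun h => (Finset.mem_sdiff.mp i'.2).2 (Finset.mem_singleton.mpr h.symm)⟩
        (N.cast (sdiff_pair S j i'.1).symm
          (φ (S \ {j}) i'.1 B i'.2
            (Finset.subset_sdiff.mpr ⟨h2, Finset.disjoint_singleton_right.mpr h3⟩)
            (N.cast (sdiff_sdiff_union' S {j} B).symm y))) := by
  rw [v'Map]
  erw [DirectSum.toModule_lof]
  rw [LinearMap.sum_apply]
  simp only [LinearMap.comp_apply]
  rfl

lemma wMap_lof (A B : Finset ℕ) (hAS : A ⊆ S) (hBS : B ⊆ S) (hd : Disjoint A B)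
    (x : N.M (S \ (A ∪ B))) :
    wMap N S (DirectSum.lof k (ιN2 S) (fun p => N.M (S \ (p.1.1 ∪ p.1.2)))
      ⟨(A, B), hAS, hBS, hd⟩ x) =
    ∑ j' ∈ B.attach,
      DirectSum.lof k (ιP1' S) (fun q => N.M (S \ ({q.1.1} ∪ q.1.2)))
        ⟨(j'.1, (A ∪ B) \ {j'.1}),
          hBS j'.2, Finset.sdiff_subset.trans (Finset.union_subset hAS hBS), by simp⟩
        (N.cast (show S \ (A ∪ B) = S \ ({j'.1} ∪ ((A ∪ B) \ {j'.1})) by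
          ext z
          have hz : z = j'.1 → z ∈ B := fun h => h ▸ j'.2
          simp only [Finset.mem_sdiff, Finset.mem_union, Finset.mem_singleton, not_or,
            not_and, not_not]
          tauto) x) := by
  rw [wMap]
  erw [DirectSum.toModule_lof]
  rw [LinearMap.sum_apply]
  simp only [LinearMap.comp_apply]
  rfl

lemma σN_lof (A B : Finset ℕ) (hAS : A ⊆ S) (hBS : B ⊆ S) (hd : Disjoint A B)
    (x : N.M (S \ (A ∪ B))) :
    σN N S (DirectSum.lof k (ιN2 S) (fun p => N.M (S \ (p.1.1 ∪ p.1.2)))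
      ⟨(A, B), hAS, hBS, hd⟩ x) =
    DirectSum.lof k (ιN2 S) (fun p => N.M (S \ (p.1.1 ∪ p.1.2)))
      ⟨(B, A), hBS, hAS, hd.symm⟩
      (N.cast (show S \ (A ∪ B) = S \ (B ∪ A) by rw [Finset.union_comm]) x) := by
  rw [σN]
  erw [DirectSum.toModule_lof]
  simp only [LinearMap.comp_apply]
  rfl

lemma σP_lof (i j : ℕ) (h1 : i ∈ S) (h2 : j ∈ S) (h3 : i ≠ j)
    (y : N.M (S \ {i, j})) :
    σP N S (DirectSum.lof k (ιP S) (fun p => N.M (S \ {p.1.1, p.1.2}))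
      ⟨(i, j), h1, h2, h3⟩ y) =
    DirectSum.lof k (ιP S) (fun p => N.M (S \ {p.1.1, p.1.2}))
      ⟨(j, i), h2, h1, h3.symm⟩
      (N.cast (show S \ {i, j} = S \ {j, i} by rw [Finset.pair_comm]) y) := by
  rw [σP]
  erw [DirectSum.toModule_lof]
  simp only [LinearMap.comp_apply]
  rfl

end ApplyLems



section MCL
variable {k : Type} [CommRing k] (N : FBModule k)

/-- Projection of `P(S)` onto its `(i,j)`-component. -/
noncomputable def pc (S : Finset ℕ) (r : ιP S) : PP N S →ₗ[k] N.M (S \ {r.1.1, r.1.2}) :=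
  DirectSum.component k (ιP S) (fun p => N.M (S \ {p.1.1, p.1.2})) r

lemma pc_lof_ne {S : Finset ℕ} (q r : ιP S) (h : q ≠ r) (y : N.M (S \ {q.1.1, q.1.2})) :
    pc N S r (DirectSum.lof k (ιP S) (fun p => N.M (S \ {p.1.1, p.1.2})) q y) = 0 :=
  DirectSum.of_eq_of_ne _ _ _ h.symm

lemma pc_lof_self {S : Finset ℕ} (q : ιP S)  (y : N.M (S \ {q.1.1, q.1.2})) :
    pc N S q (DirectSum.lof k (ιP S) (fun p => N.M (S \ {p.1.1, p.1.2})) q y) = y :=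
  DFinsupp.single_eq_same

variable (φ : ∀ (S : Finset ℕ) (i : ℕ) (B : Finset ℕ), i ∈ S → B ⊆ S →
  (N.M (S \ B) →ₗ[k] N.M (S \ {i})))
variable (S A B : Finset ℕ) (j i : ℕ)

lemma vu_component (hAS : A ⊆ S) (hBS : B ⊆ S) (hd : Disjoint A B)
    (hj : j ∈ S) (hi : i ∈ S) (hji : j ≠ i) (x : N.M (S \ (A ∪ B))) :
    pc N S ⟨(j, i), hj, hi, hji⟩ (vMap N φ S (uMap N φ S (DirectSum.lof k (ιN2 S)
        (fun p => N.M (S \ (p.1.1 ∪ p.1.2))) ⟨(A, B), hAS, hBS, hd⟩ x))) =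
    (if h : i ∈ A then 0 else t1 N φ S A B j i hAS hBS hd hj hi hji h) x := by
  erw [uMap_lof N φ S A B hAS hBS hd x, map_sum, map_sum]
  by_cases hiA : i ∈ A
  · rw [dif_pos hiA, LinearMap.zero_apply]
    refine Finset.sum_eq_zero (fun b _ => ?_)
    erw [vMap_lof N φ S A b.1 hAS (Finset.mem_sdiff.mp b.2).1 (Finset.mem_sdiff.mp b.2).2]
    erw [map_sum]
    refine Finset.sum_eq_zero (fun c _ => ?_)
    refine pc_lof_ne N _ _ (fun e => ?_) _
    have := congrArg (fun z => z.1.2) e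
    simp only at this
    exact (Finset.mem_sdiff.mp b.2).2 (this ▸ hiA)
  · rw [dif_neg hiA]
    refine Eq.trans (Finset.sum_eq_single_of_mem _
      (Finset.mem_attach _ (⟨i, Finset.mem_sdiff.mpr ⟨hi, hiA⟩⟩ : {z // z ∈ S \ A}))
      (fun b _ hb => ?_)) ?_
    · erw [vMap_lof N φ S A b.1 hAS (Finset.mem_sdiff.mp b.2).1 (Finset.mem_sdiff.mp b.2).2]
      erw [map_sum]
      refine Finset.sum_eq_zero (fun c _ => ?_)
      refine pc_lof_ne N _ _ (fun e => ?_) _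
      have := congrArg (fun z => z.1.2) e
      simp only at this
      exact hb (Subtype.ext this)
    · erw [vMap_lof N φ S A i hAS hi hiA]
      erw [map_sum]
      refine Eq.trans (Finset.sum_eq_single_of_mem _
        (Finset.mem_attach _ (⟨j, Finset.mem_sdiff.mpr ⟨hj, by simp [hji]⟩⟩ :
          {z // z ∈ S \ ({i} : Finset ℕ)}))
        (fun c _ hc => ?_)) ?_
      · refine pc_lof_ne N _ _ (fun e => ?_) _
        have := congrArg (fun z => z.1.1) e
        simp only at this
        exact hc (Subtype.ext this)
      · erw [pc_lof_self]
        rw [t1]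
        simp only [LinearMap.comp_apply]
        rw [FBModule.cast_cast_apply]

lemma v'u'_component (hAS : A ⊆ S) (hBS : B ⊆ S) (hd : Disjoint A B)
    (hj : j ∈ S) (hi : i ∈ S) (hji : j ≠ i) (x : N.M (S \ (A ∪ B))) :
    pc N S ⟨(j, i), hj, hi, hji⟩ (v'Map N φ S (u'Map N φ S (DirectSum.lof k (ιN2 S)
        (fun p => N.M (S \ (p.1.1 ∪ p.1.2))) ⟨(A, B), hAS, hBS, hd⟩ x))) =
    (if h : j ∈ B then 0 else t2 N φ S A B j i hAS hBS hd hj hi hji h) x := by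
  erw [u'Map_lof N φ S A B hAS hBS hd x, map_sum, map_sum]
  by_cases hjB : j ∈ B
  · rw [dif_pos hjB, LinearMap.zero_apply]
    refine Finset.sum_eq_zero (fun b _ => ?_)
    erw [v'Map_lof N φ S b.1 B (Finset.mem_sdiff.mp b.2).1 hBS (Finset.mem_sdiff.mp b.2).2]
    erw [map_sum]
    refine Finset.sum_eq_zero (fun c _ => ?_)
    refine pc_lof_ne N _ _ (fun e => ?_) _
    have := congrArg (fun z => z.1.1) e
    simp only at this
    exact (Finset.mem_sdiff.mp b.2).2 (this ▸ hjB)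
  · rw [dif_neg hjB]
    refine Eq.trans (Finset.sum_eq_single_of_mem _
      (Finset.mem_attach _ (⟨j, Finset.mem_sdiff.mpr ⟨hj, hjB⟩⟩ : {z // z ∈ S \ B}))
      (fun b _ hb => ?_)) ?_
    · erw [v'Map_lof N φ S b.1 B (Finset.mem_sdiff.mp b.2).1 hBS (Finset.mem_sdiff.mp b.2).2]
      erw [map_sum]
      refine Finset.sum_eq_zero (fun c _ => ?_)
      refine pc_lof_ne N _ _ (fun e => ?_) _
      have := congrArg (fun z => z.1.1) e
      simp only at this
      exact hb (Subtype.ext this)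
    · erw [v'Map_lof N φ S j B hj hBS hjB]
      erw [map_sum]
      refine Eq.trans (Finset.sum_eq_single_of_mem _
        (Finset.mem_attach _ (⟨i, Finset.mem_sdiff.mpr ⟨hi, by simp [Ne.symm hji]⟩⟩ :
          {z // z ∈ S \ ({j} : Finset ℕ)}))
        (fun c _ hc => ?_)) ?_
      · refine pc_lof_ne N _ _ (fun e => ?_) _
        have := congrArg (fun z => z.1.2) e
        simp only at this
        exact hc (Subtype.ext this)
      · erw [pc_lof_self]
        rw [t2]
        simp only [LinearMap.comp_apply]
        rw [FBModule.cast_cast_apply]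

lemma v'w_component (hAS : A ⊆ S) (hBS : B ⊆ S) (hd : Disjoint A B)
    (hj : j ∈ S) (hi : i ∈ S) (hji : j ≠ i) (x : N.M (S \ (A ∪ B))) :
    pc N S ⟨(j, i), hj, hi, hji⟩ (v'Map N φ S (wMap N S (DirectSum.lof k (ιN2 S)
        (fun p => N.M (S \ (p.1.1 ∪ p.1.2))) ⟨(A, B), hAS, hBS, hd⟩ x))) =
    (if h : j ∈ B then t3 N φ S A B j i hAS hBS hd hj hi hji h else 0) x := by
  erw [wMap_lof N S A B hAS hBS hd x, map_sum, map_sum]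
  by_cases hjB : j ∈ B
  · rw [dif_pos hjB]
    refine Eq.trans (Finset.sum_eq_single_of_mem _
      (Finset.mem_attach _ (⟨j, hjB⟩ : {z // z ∈ B}))
      (fun b _ hb => ?_)) ?_
    · erw [v'Map_lof N φ S b.1 ((A ∪ B) \ {b.1}) (hBS b.2)
        (Finset.sdiff_subset.trans (Finset.union_subset hAS hBS)) (by simp)]
      erw [map_sum]
      refine Finset.sum_eq_zero (fun c _ => ?_)
      refine pc_lof_ne N _ _ (fun e => ?_) _
      have := congrArg (fun z => z.1.1) e
      simp only at this
      exact hb (Subtype.ext this)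
    · erw [v'Map_lof N φ S j ((A ∪ B) \ {j}) hj
        (Finset.sdiff_subset.trans (Finset.union_subset hAS hBS)) (by simp)]
      erw [map_sum]
      refine Eq.trans (Finset.sum_eq_single_of_mem _
        (Finset.mem_attach _ (⟨i, Finset.mem_sdiff.mpr ⟨hi, by simp [Ne.symm hji]⟩⟩ :
          {z // z ∈ S \ ({j} : Finset ℕ)}))
        (fun c _ hc => ?_)) ?_
      · refine pc_lof_ne N _ _ (fun e => ?_) _
        have := congrArg (fun z => z.1.2) e
        simp only at this
        exact hc (Subtype.ext this)
      · erw [pc_lof_self]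
        rw [t3]
        simp only [LinearMap.comp_apply]
        rw [FBModule.cast_cast_apply]
  · rw [dif_neg hjB, LinearMap.zero_apply]
    refine Finset.sum_eq_zero (fun b _ => ?_)
    erw [v'Map_lof N φ S b.1 ((A ∪ B) \ {b.1}) (hBS b.2)
      (Finset.sdiff_subset.trans (Finset.union_subset hAS hBS)) (by simp)]
    erw [map_sum]
    refine Finset.sum_eq_zero (fun c _ => ?_)
    refine pc_lof_ne N _ _ (fun e => ?_) _
    have := congrArg (fun z => z.1.1) e
    simp only at this
    exact hjB (this ▸ b.2)

lemma sigma_component (hAS : A ⊆ S) (hBS : B ⊆ S) (hd : Disjoint A B)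
    (hj : j ∈ S) (hi : i ∈ S) (hji : j ≠ i) (x : N.M (S \ (A ∪ B))) :
    pc N S ⟨(j, i), hj, hi, hji⟩ (σP N S (v'Map N φ S (wMap N S (σN N S
      (DirectSum.lof k (ιN2 S)
        (fun p => N.M (S \ (p.1.1 ∪ p.1.2))) ⟨(A, B), hAS, hBS, hd⟩ x))))) =
    (if h : i ∈ A then t4 N φ S A B j i hAS hBS hd hj hi hji h else 0) x := by
  erw [σN_lof N S A B hAS hBS hd x,
    wMap_lof N S B A hBS hAS hd.symm _, map_sum, map_sum, map_sum]
  by_cases hiA : i ∈ A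
  · rw [dif_pos hiA]
    refine Eq.trans (Finset.sum_eq_single_of_mem _
      (Finset.mem_attach _ (⟨i, hiA⟩ : {z // z ∈ A}))
      (fun b _ hb => ?_)) ?_
    · erw [v'Map_lof N φ S b.1 ((B ∪ A) \ {b.1}) (hAS b.2)
        (Finset.sdiff_subset.trans (Finset.union_subset hBS hAS)) (by simp)]
      erw [map_sum, map_sum]
      refine Finset.sum_eq_zero (fun c _ => ?_)
      erw [σP_lof N S b.1 c.1 (hAS b.2) (Finset.mem_sdiff.mp c.2).1
        (fun e => (Finset.mem_sdiff.mp c.2).2 (Finset.mem_singleton.mpr e.symm))]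
      refine pc_lof_ne N _ _ (fun e => ?_) _
      have := congrArg (fun z => z.1.2) e
      simp only at this
      exact hb (Subtype.ext this)
    · erw [v'Map_lof N φ S i ((B ∪ A) \ {i}) hi
        (Finset.sdiff_subset.trans (Finset.union_subset hBS hAS)) (by simp)]
      erw [map_sum, map_sum]
      refine Eq.trans (Finset.sum_eq_single_of_mem _
        (Finset.mem_attach _ (⟨j, Finset.mem_sdiff.mpr ⟨hj, by simp [hji]⟩⟩ :
          {z // z ∈ S \ ({i} : Finset ℕ)}))
        (fun c _ hc => ?_)) ?_
      · erw [σP_lof N S i c.1 hi (Finset.mem_sdiff.mp c.2).1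
          (fun e => (Finset.mem_sdiff.mp c.2).2 (Finset.mem_singleton.mpr e.symm))]
        refine pc_lof_ne N _ _ (fun e => ?_) _
        have := congrArg (fun z => z.1.1) e
        simp only at this
        exact hc (Subtype.ext this)
      · erw [σP_lof N S i j hi hj (Ne.symm hji)]
        erw [pc_lof_self]
        rw [t4]
        simp only [LinearMap.comp_apply]
        simp only [FBModule.cast_cast_apply]
  · rw [dif_neg hiA, LinearMap.zero_apply]
    refine Finset.sum_eq_zero (fun b _ => ?_)
    erw [v'Map_lof N φ S b.1 ((B ∪ A) \ {b.1}) (hAS b.2)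
      (Finset.sdiff_subset.trans (Finset.union_subset hBS hAS)) (by simp)]
    erw [map_sum, map_sum]
    refine Finset.sum_eq_zero (fun c _ => ?_)
    erw [σP_lof N S b.1 c.1 (hAS b.2) (Finset.mem_sdiff.mp c.2).1
      (fun e => (Finset.mem_sdiff.mp c.2).2 (Finset.mem_singleton.mpr e.symm))]
    refine pc_lof_ne N _ _ (fun e => ?_) _
    have := congrArg (fun z => z.1.2) e
    simp only at this
    exact hiA (this ▸ b.2)

end MCL

section PPExt
variable {k : Type} [CommRing k] (N : FBModule k)
lemma pp_ext {S : Finset ℕ} {u v : PP N S}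
    (h : ∀ r : ιP S, pc N S r u = pc N S r v) : u = v :=
  DFinsupp.ext h
end PPExt


section Cases
variable {k : Type} [CommRing k] (N : FBModule k)

lemma cast_id_apply {s : Finset ℕ} (h : s = s) (z : N.M s) : N.cast h z = z := by
  rw [FBModule.cast_rfl]; rfl

lemma cast_phi_apply (φ : ∀ (S : Finset ℕ) (i : ℕ) (B : Finset ℕ), i ∈ S → B ⊆ S →
      (N.M (S \ B) →ₗ[k] N.M (S \ {i})))
    {S S' B B' : Finset ℕ} {i : ℕ} (hS : S = S') (hB : B = B')
    (p1 : i ∈ S) (p2 : B ⊆ S) (q1 : i ∈ S') (q2 : B' ⊆ S')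
    (hs : S \ B = S' \ B') (ht : S \ {i} = S' \ {i}) (z : N.M (S \ B)) :
    φ S' i B' q1 q2 (N.cast hs z) = N.cast ht (φ S i B p1 p2 z) := by
  subst hS; subst hB
  rw [cast_id_apply, cast_id_apply]

lemma cast_alpha_apply (α : ∀ (S : Finset ℕ) (i : ℕ) (A : Finset ℕ), i ∈ S → A ⊆ S → i ∉ A →
      (N.M (S \ A) →ₗ[k] N.M (S \ {i})))
    {S S' A A' : Finset ℕ} {i : ℕ} (hS : S = S') (hA : A = A')
    (p1 : i ∈ S) (p2 : A ⊆ S) (p3 : i ∉ A) (q1 : i ∈ S') (q2 : A' ⊆ S') (q3 : i ∉ A')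
    (hs : S \ A = S' \ A') (ht : S \ {i} = S' \ {i}) (z : N.M (S \ A)) :
    α S' i A' q1 q2 q3 (N.cast hs z) = N.cast ht (α S i A p1 p2 p3 z) := by
  subst hS; subst hA
  rw [cast_id_apply, cast_id_apply]

lemma cast_omega_apply (ω : ∀ (T C : Finset ℕ), C ⊆ T → (N.M (T \ C) →ₗ[k] N.M T))
    {T T' C C' : Finset ℕ} (hT : T = T') (hC : C = C')
    (p : C ⊆ T) (q : C' ⊆ T') (hs : T \ C = T' \ C') (z : N.M (T \ C)) :
    ω T' C' q (N.cast hs z) = N.cast hT (ω T C p z) := by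
  subst hT; subst hC
  rw [cast_id_apply, cast_id_apply]

lemma conj_inj {s s₀ t₀ t : Finset ℕ} (hR : s = s₀) (hL : t₀ = t)
    (P Q : N.M s₀ →ₗ[k] N.M t₀) :
    N.cast hL ∘ₗ P ∘ₗ N.cast hR = N.cast hL ∘ₗ Q ∘ₗ N.cast hR ↔ P = Q := by
  constructor
  · intro h
    have h2 := congrArg (fun F => N.cast hL.symm ∘ₗ F ∘ₗ N.cast hR.symm) h
    simp only [LinearMap.comp_assoc] at h2
    rw [FBModule.cast_cast] at h2
    simp only [← LinearMap.comp_assoc] at h2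
    rw [FBModule.cast_cast] at h2
    rw [FBModule.cast_rfl, FBModule.cast_rfl, LinearMap.comp_id, LinearMap.id_comp] at h2
    exact h2
  · intro h; rw [h]
end Cases


section Sides
variable {k : Type} [CommRing k] (N : FBModule k)
variable (α : ∀ (S : Finset ℕ) (i : ℕ) (A : Finset ℕ), i ∈ S → A ⊆ S → i ∉ A →
    (N.M (S \ A) →ₗ[k] N.M (S \ {i})))
variable (ω : ∀ (T C : Finset ℕ), C ⊆ T → (N.M (T \ C) →ₗ[k] N.M T))

def A1L (S : Finset ℕ) (i kk : ℕ) (A C : Finset ℕ) (hi : i ∈ S) (hk : kk ∈ S)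
    (hik : i ≠ kk) (hA : A ⊆ S) (hC : C ⊆ S) (hAC : Disjoint A C)
    (hiA : i ∉ A) (_hiC : i ∉ C) (hkA : kk ∉ A) (hkC : kk ∉ C) :
    N.M ((S \ A) \ C) →ₗ[k] N.M ((S \ {kk}) \ {i}) :=
  α (S \ {kk}) i A (Finset.mem_sdiff.mpr ⟨hi, by simp [hik]⟩)
      (Finset.subset_sdiff.mpr ⟨hA, Finset.disjoint_singleton_right.mpr hkA⟩) hiA ∘ₗ
    N.cast (sdiff_sdiff_comm' S A {kk}) ∘ₗ
    α (S \ A) kk C (Finset.mem_sdiff.mpr ⟨hk, hkA⟩)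
      (Finset.subset_sdiff.mpr ⟨hC, hAC.symm⟩) hkC

def A1R (S : Finset ℕ) (i kk : ℕ) (A C : Finset ℕ) (hi : i ∈ S) (hk : kk ∈ S)
    (hik : i ≠ kk) (hA : A ⊆ S) (hC : C ⊆ S) (hAC : Disjoint A C)
    (hiA : i ∉ A) (hiC : i ∉ C) (_hkA : kk ∉ A) (hkC : kk ∉ C) :
    N.M ((S \ A) \ C) →ₗ[k] N.M ((S \ {kk}) \ {i}) :=
  N.cast (sdiff_sdiff_comm' S {i} {kk}) ∘ₗ
    α (S \ {i}) kk C (Finset.mem_sdiff.mpr ⟨hk, by simp [hik.symm]⟩)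
      (Finset.subset_sdiff.mpr ⟨hC, Finset.disjoint_singleton_right.mpr hiC⟩) hkC ∘ₗ
    N.cast (sdiff_sdiff_comm' S C {i}) ∘ₗ
    α (S \ C) i A (Finset.mem_sdiff.mpr ⟨hi, hiC⟩)
      (Finset.subset_sdiff.mpr ⟨hA, hAC⟩) hiA ∘ₗ
    N.cast (sdiff_sdiff_comm' S A C)

lemma condA1_iff : CondA1 N α ↔ ∀ (S : Finset ℕ) (i kk : ℕ) (A C : Finset ℕ)
    (hi : i ∈ S) (hk : kk ∈ S) (hik : i ≠ kk) (hA : A ⊆ S) (hC : C ⊆ S)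
    (hAC : Disjoint A C) (hiA : i ∉ A) (hiC : i ∉ C) (hkA : kk ∉ A) (hkC : kk ∉ C),
    A1L N α S i kk A C hi hk hik hA hC hAC hiA hiC hkA hkC =
    A1R N α S i kk A C hi hk hik hA hC hAC hiA hiC hkA hkC := Iff.rfl

def A2L (S : Finset ℕ) (i : ℕ) (A C : Finset ℕ) (hi : i ∈ S) (hA : A ⊆ S) (hC : C ⊆ S)
    (hAC : Disjoint A C) (hiA : i ∉ A) (_hiC : i ∉ C) :
    N.M ((S \ A) \ C) →ₗ[k] N.M (S \ {i}) :=
  α S i A hi hA hiA ∘ₗ ω (S \ A) C (Finset.subset_sdiff.mpr ⟨hC, hAC.symm⟩)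

def A2R (S : Finset ℕ) (i : ℕ) (A C : Finset ℕ) (hi : i ∈ S) (hA : A ⊆ S) (hC : C ⊆ S)
    (hAC : Disjoint A C) (hiA : i ∉ A) (hiC : i ∉ C) :
    N.M ((S \ A) \ C) →ₗ[k] N.M (S \ {i}) :=
  ω (S \ {i}) C (Finset.subset_sdiff.mpr ⟨hC, Finset.disjoint_singleton_right.mpr hiC⟩) ∘ₗ
    N.cast (sdiff_sdiff_comm' S C {i}) ∘ₗ
    α (S \ C) i A (Finset.mem_sdiff.mpr ⟨hi, hiC⟩)
      (Finset.subset_sdiff.mpr ⟨hA, hAC⟩) hiA ∘ₗ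
    N.cast (sdiff_sdiff_comm' S A C)

lemma condA2_iff : CondA2 N α ω ↔ ∀ (S : Finset ℕ) (i : ℕ) (A C : Finset ℕ)
    (hi : i ∈ S) (hA : A ⊆ S) (hC : C ⊆ S) (hAC : Disjoint A C) (hiA : i ∉ A)
    (hiC : i ∉ C),
    A2L N α ω S i A C hi hA hC hAC hiA hiC =
    A2R N α ω S i A C hi hA hC hAC hiA hiC := Iff.rfl

def A3L (T C D : Finset ℕ) (hC : C ⊆ T) (hD : D ⊆ T) (hCD : Disjoint C D) :
    N.M ((T \ C) \ D) →ₗ[k] N.M T :=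
  ω T C hC ∘ₗ ω (T \ C) D (Finset.subset_sdiff.mpr ⟨hD, hCD.symm⟩)

def A3R (T C D : Finset ℕ) (hC : C ⊆ T) (hD : D ⊆ T) (hCD : Disjoint C D) :
    N.M ((T \ C) \ D) →ₗ[k] N.M T :=
  ω T D hD ∘ₗ ω (T \ D) C (Finset.subset_sdiff.mpr ⟨hC, hCD⟩) ∘ₗ
    N.cast (sdiff_sdiff_comm' T C D)

lemma condA3_iff : CondA3 N ω ↔ ∀ (T C D : Finset ℕ) (hC : C ⊆ T) (hD : D ⊆ T)
    (hCD : Disjoint C D),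
    A3L N ω T C D hC hD hCD = A3R N ω T C D hC hD hCD := Iff.rfl

def BcL (S : Finset ℕ) (A B : Finset ℕ) (j i : ℕ) (hA : A ⊆ S) (hB : B ⊆ S)
    (hAB : Disjoint A B) (hjB : j ∈ B) (hiS : i ∈ S) (hiA : i ∉ A) (hiB : i ∉ B) :
    N.M ((S \ A) \ B) →ₗ[k] N.M ((S \ {i}) \ {j}) :=
  α (S \ {i}) j A
      (Finset.mem_sdiff.mpr ⟨hB hjB,
        Finset.notMem_singleton.mpr (fun h => hiB (by rw [← h]; exact hjB))⟩)
      (Finset.subset_sdiff.mpr ⟨hA, Finset.disjoint_singleton_right.mpr hiA⟩)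
      (Finset.disjoint_right.mp hAB hjB) ∘ₗ
    N.cast (sdiff_sdiff_comm' S A {i}) ∘ₗ
    α (S \ A) i B (Finset.mem_sdiff.mpr ⟨hiS, hiA⟩)
      (Finset.subset_sdiff.mpr ⟨hB, hAB.symm⟩) hiB

def BcR (S : Finset ℕ) (A B : Finset ℕ) (j i : ℕ) (hA : A ⊆ S) (hB : B ⊆ S)
    (hAB : Disjoint A B) (hjB : j ∈ B) (hiS : i ∈ S) (hiA : i ∉ A) (hiB : i ∉ B) :
    N.M ((S \ A) \ B) →ₗ[k] N.M ((S \ {i}) \ {j}) :=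
  N.cast (sdiff_sdiff_comm' S {j} {i}) ∘ₗ
    α (S \ {j}) i ((A ∪ B) \ {j})
      (Finset.mem_sdiff.mpr ⟨hiS,
        Finset.notMem_singleton.mpr (fun h => hiB (by rw [h]; exact hjB))⟩)
      (Finset.sdiff_subset_sdiff (Finset.union_subset hA hB) (Finset.Subset.refl _))
      (by simp [hiA, hiB]) ∘ₗ
    N.cast ((sdiff_sdiff_union' S A B).trans
      (mem_sdiff_erase' S (A ∪ B) j (Finset.mem_union_right A hjB)))

lemma condBc_iff : CondBc N α ↔ ∀ (S : Finset ℕ) (A B : Finset ℕ) (j i : ℕ)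
    (hA : A ⊆ S) (hB : B ⊆ S) (hAB : Disjoint A B) (hjB : j ∈ B) (hiS : i ∈ S)
    (hiA : i ∉ A) (hiB : i ∉ B),
    BcL N α S A B j i hA hB hAB hjB hiS hiA hiB =
    BcR N α S A B j i hA hB hAB hjB hiS hiA hiB := Iff.rfl

def CcL (S : Finset ℕ) (A B : Finset ℕ) (j : ℕ) (hA : A ⊆ S) (hB : B ⊆ S)
    (hAB : Disjoint A B) (hjB : j ∈ B) :
    N.M ((S \ A) \ B) →ₗ[k] N.M (S \ {j}) :=
  α S j A (hB hjB) hA (Finset.disjoint_right.mp hAB hjB) ∘ₗ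
    ω (S \ A) B (Finset.subset_sdiff.mpr ⟨hB, hAB.symm⟩)

def CcR (S : Finset ℕ) (A B : Finset ℕ) (j : ℕ) (hA : A ⊆ S) (hB : B ⊆ S)
    (hAB : Disjoint A B) (hjB : j ∈ B) :
    N.M ((S \ A) \ B) →ₗ[k] N.M (S \ {j}) :=
  ω (S \ {j}) ((A ∪ B) \ {j})
      (Finset.sdiff_subset_sdiff (Finset.union_subset hA hB) (Finset.Subset.refl _)) ∘ₗ
    N.cast ((sdiff_sdiff_union' S A B).trans
      (mem_sdiff_erase' S (A ∪ B) j (Finset.mem_union_right A hjB)))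

lemma condCc_iff : CondCc N α ω ↔ ∀ (S : Finset ℕ) (A B : Finset ℕ) (j : ℕ)
    (hA : A ⊆ S) (hB : B ⊆ S) (hAB : Disjoint A B) (hjB : j ∈ B),
    CcL N α ω S A B j hA hB hAB hjB = CcR N ω S A B j hA hB hAB hjB := Iff.rfl

/-- Transport of the `A2`-equation along equalities of the underlying sets. -/
lemma A2_transport {S S' A A' C C' : Finset ℕ} {i : ℕ}
    (hS : S' = S) (hA : A' = A) (hC : C' = C)
    (hi' : i ∈ S') (hA2' : A' ⊆ S') (hC' : C' ⊆ S') (hAC' : Disjoint A' C')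
    (hiA' : i ∉ A') (hiC' : i ∉ C')
    (hi : i ∈ S) (hA2 : A ⊆ S) (hC2 : C ⊆ S) (hAC : Disjoint A C)
    (hiA : i ∉ A) (hiC : i ∉ C)
    (h : A2L N α ω S' i A' C' hi' hA2' hC' hAC' hiA' hiC' =
      A2R N α ω S' i A' C' hi' hA2' hC' hAC' hiA' hiC') :
    A2L N α ω S i A C hi hA2 hC2 hAC hiA hiC =
      A2R N α ω S i A C hi hA2 hC2 hAC hiA hiC := by
  subst hS; subst hA; subst hC; exact h

lemma A3_transport {T T' C C' D D' : Finset ℕ}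
    (hT : T' = T) (hC : C' = C) (hD : D' = D)
    (hC2' : C' ⊆ T') (hD' : D' ⊆ T') (hCD' : Disjoint C' D')
    (hC2 : C ⊆ T) (hD2 : D ⊆ T) (hCD : Disjoint C D)
    (h : A3L N ω T' C' D' hC2' hD' hCD' = A3R N ω T' C' D' hC2' hD' hCD') :
    A3L N ω T C D hC2 hD2 hCD = A3R N ω T C D hC2 hD2 hCD := by
  subst hT; subst hC; subst hD; exact h

lemma Cc_transport {S S' A A' B B' : Finset ℕ} {j : ℕ}
    (hS : S' = S) (hA : A' = A) (hB : B' = B)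
    (hA2' : A' ⊆ S') (hB' : B' ⊆ S') (hAB' : Disjoint A' B') (hjB' : j ∈ B')
    (hA2 : A ⊆ S) (hB2 : B ⊆ S) (hAB : Disjoint A B) (hjB : j ∈ B)
    (h : CcL N α ω S' A' B' j hA2' hB' hAB' hjB' =
      CcR N ω S' A' B' j hA2' hB' hAB' hjB') :
    CcL N α ω S A B j hA2 hB2 hAB hjB = CcR N ω S A B j hA2 hB2 hAB hjB := by
  subst hS; subst hA; subst hB; exact h

end Sides


section NF
variable {k : Type} [CommRing k] (N : FBModule k)
variable (α : ∀ (S : Finset ℕ) (i : ℕ) (A : Finset ℕ), i ∈ S → A ⊆ S → i ∉ A →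
    (N.M (S \ A) →ₗ[k] N.M (S \ {i})))
variable (ω : ∀ (T C : Finset ℕ), C ⊆ T → (N.M (T \ C) →ₗ[k] N.M T))
variable (φ : ∀ (S : Finset ℕ) (i : ℕ) (B : Finset ℕ), i ∈ S → B ⊆ S →
    (N.M (S \ B) →ₗ[k] N.M (S \ {i})))
variable (hφoff : ∀ (S : Finset ℕ) (i : ℕ) (B : Finset ℕ) (hi : i ∈ S) (hB : B ⊆ S)
      (h : i ∉ B), φ S i B hi hB = α S i B hi hB h)
variable (hφdiag : ∀ (S : Finset ℕ) (i : ℕ) (B : Finset ℕ) (hi : i ∈ S) (hB : B ⊆ S)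
      (h : i ∈ B),
      φ S i B hi hB =
        ω (S \ {i}) (B \ {i})
            (Finset.sdiff_subset_sdiff hB (Finset.Subset.refl _)) ∘ₗ
          N.cast (mem_sdiff_erase' S B i h))
variable (S A B : Finset ℕ) (j i : ℕ)
include hφoff hφdiag

lemma nf_NN_t1 (hAS : A ⊆ S) (hBS : B ⊆ S) (hd : Disjoint A B)
    (hj : j ∈ S) (hi : i ∈ S) (hji : j ≠ i)
    (hiA : i ∉ A) (hiB : i ∉ B) (hjA : j ∉ A) (hjB : j ∉ B) :
    t1 N φ S A B j i hAS hBS hd hj hi hji hiA =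
      N.cast ((sdiff_sdiff_comm' S {i} {j}).trans (sdiff_pair S j i).symm) ∘ₗ
      A1L N α S j i A B hj hi hji hAS hBS hd hjA hjB hiA hiB ∘ₗ
      N.cast (sdiff_sdiff_union' S A B).symm := by
  simp only [t1, A1L]
  rw [hφoff (S \ {i}) j A _ _ hjA, hφoff (S \ A) i B _ _ hiB]
  try rfl

lemma nf_NN_t2 (hAS : A ⊆ S) (hBS : B ⊆ S) (hd : Disjoint A B)
    (hj : j ∈ S) (hi : i ∈ S) (hji : j ≠ i)
    (hiA : i ∉ A) (hiB : i ∉ B) (hjA : j ∉ A) (hjB : j ∉ B) :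
    t2 N φ S A B j i hAS hBS hd hj hi hji hjB =
      N.cast ((sdiff_sdiff_comm' S {i} {j}).trans (sdiff_pair S j i).symm) ∘ₗ
      A1R N α S j i A B hj hi hji hAS hBS hd hjA hjB hiA hiB ∘ₗ
      N.cast (sdiff_sdiff_union' S A B).symm := by
  apply LinearMap.ext; intro x
  simp only [t2, A1R, LinearMap.comp_apply]
  rw [hφoff (S \ {j}) i B _ _ hiB, hφoff (S \ B) j A _ _ hjA]
  simp only [LinearMap.comp_apply, FBModule.cast_cast_apply]
  try rfl

lemma nf_NB_t1 (hAS : A ⊆ S) (hBS : B ⊆ S) (hd : Disjoint A B)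
    (hj : j ∈ S) (hi : i ∈ S) (hji : j ≠ i)
    (hiA : i ∉ A) (hiB : i ∉ B) (hjB : j ∈ B) :
    t1 N φ S A B j i hAS hBS hd hj hi hji hiA =
      N.cast ((sdiff_sdiff_comm' S {i} {j}).trans (sdiff_pair S j i).symm) ∘ₗ
      BcL N α S A B j i hAS hBS hd hjB hi hiA hiB ∘ₗ
      N.cast (sdiff_sdiff_union' S A B).symm := by
  simp only [t1, BcL]
  rw [hφoff (S \ {i}) j A _ _ (Finset.disjoint_right.mp hd hjB),
    hφoff (S \ A) i B _ _ hiB]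
  try rfl

lemma nf_NB_t3 (hAS : A ⊆ S) (hBS : B ⊆ S) (hd : Disjoint A B)
    (hj : j ∈ S) (hi : i ∈ S) (hji : j ≠ i)
    (hiA : i ∉ A) (hiB : i ∉ B) (hjB : j ∈ B) :
    t3 N φ S A B j i hAS hBS hd hj hi hji hjB =
      N.cast ((sdiff_sdiff_comm' S {i} {j}).trans (sdiff_pair S j i).symm) ∘ₗ
      BcR N α S A B j i hAS hBS hd hjB hi hiA hiB ∘ₗ
      N.cast (sdiff_sdiff_union' S A B).symm := by
  apply LinearMap.ext; intro x
  simp only [t3, BcR, LinearMap.comp_apply]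
  rw [hφoff (S \ {j}) i ((A ∪ B) \ {j}) _ _ (by simp [hiA, hiB])]
  simp only [LinearMap.comp_apply, FBModule.cast_cast_apply]
  try rfl

lemma nf_AN_t2 (hAS : A ⊆ S) (hBS : B ⊆ S) (hd : Disjoint A B)
    (hj : j ∈ S) (hi : i ∈ S) (hji : j ≠ i)
    (hiA : i ∈ A) (hjA : j ∉ A) (hjB : j ∉ B) :
    t2 N φ S A B j i hAS hBS hd hj hi hji hjB =
      N.cast (sdiff_pair S j i).symm ∘ₗ
      BcL N α S B A i j hBS hAS hd.symm hiA hj hjB hjA ∘ₗ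
      N.cast (show S \ (A ∪ B) = (S \ B) \ A by
        rw [sdiff_sdiff_union', Finset.union_comm]) := by
  simp only [t2, BcL]
  rw [hφoff (S \ {j}) i B _ _ (Finset.disjoint_left.mp hd hiA),
    hφoff (S \ B) j A _ _ hjA]
  try rfl

lemma nf_AN_t4 (hAS : A ⊆ S) (hBS : B ⊆ S) (hd : Disjoint A B)
    (hj : j ∈ S) (hi : i ∈ S) (hji : j ≠ i)
    (hiA : i ∈ A) (hjA : j ∉ A) (hjB : j ∉ B) :
    t4 N φ S A B j i hAS hBS hd hj hi hji hiA =
      N.cast (sdiff_pair S j i).symm ∘ₗ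
      BcR N α S B A i j hBS hAS hd.symm hiA hj hjB hjA ∘ₗ
      N.cast (show S \ (A ∪ B) = (S \ B) \ A by
        rw [sdiff_sdiff_union', Finset.union_comm]) := by
  apply LinearMap.ext; intro x
  simp only [t4, BcR, LinearMap.comp_apply]
  rw [hφoff (S \ {i}) j ((B ∪ A) \ {i}) _ _ (by simp [hjA, hjB])]
  simp only [LinearMap.comp_apply, FBModule.cast_cast_apply]
  try rfl

end NF


section NF2
variable {k : Type} [CommRing k] (N : FBModule k)
variable (α : ∀ (S : Finset ℕ) (i : ℕ) (A : Finset ℕ), i ∈ S → A ⊆ S → i ∉ A →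
    (N.M (S \ A) →ₗ[k] N.M (S \ {i})))
variable (ω : ∀ (T C : Finset ℕ), C ⊆ T → (N.M (T \ C) →ₗ[k] N.M T))
variable (φ : ∀ (S : Finset ℕ) (i : ℕ) (B : Finset ℕ), i ∈ S → B ⊆ S →
    (N.M (S \ B) →ₗ[k] N.M (S \ {i})))
variable (hφoff : ∀ (S : Finset ℕ) (i : ℕ) (B : Finset ℕ) (hi : i ∈ S) (hB : B ⊆ S)
      (h : i ∉ B), φ S i B hi hB = α S i B hi hB h)
variable (hφdiag : ∀ (S : Finset ℕ) (i : ℕ) (B : Finset ℕ) (hi : i ∈ S) (hB : B ⊆ S)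
      (h : i ∈ B),
      φ S i B hi hB =
        ω (S \ {i}) (B \ {i})
            (Finset.sdiff_subset_sdiff hB (Finset.Subset.refl _)) ∘ₗ
          N.cast (mem_sdiff_erase' S B i h))
variable (S A B : Finset ℕ) (j i : ℕ)
include hφoff hφdiag

lemma nf_BN_t1 (hAS : A ⊆ S) (hBS : B ⊆ S) (hd : Disjoint A B)
    (hj : j ∈ S) (hi : i ∈ S) (hji : j ≠ i)
    (hiA : i ∉ A) (hiB : i ∈ B) (hjA : j ∉ A) (hjB : j ∉ B) :
    t1 N φ S A B j i hAS hBS hd hj hi hji hiA =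
      N.cast ((sdiff_sdiff_comm' S {i} {j}).trans (sdiff_pair S j i).symm) ∘ₗ
      A2L N α ω (S \ {i}) j A (B \ {i})
        (Finset.mem_sdiff.mpr ⟨hj, by simp [hji]⟩)
        (Finset.subset_sdiff.mpr ⟨hAS, Finset.disjoint_singleton_right.mpr hiA⟩)
        (Finset.sdiff_subset_sdiff hBS (Finset.Subset.refl _))
        (Disjoint.mono_right Finset.sdiff_subset hd)
        hjA (by simp [hjB]) ∘ₗ
      N.cast (show S \ (A ∪ B) = ((S \ {i}) \ A) \ (B \ {i}) by
        ext z
        have hz : z = i → z ∈ B := fun h => h ▸ hiB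
        simp only [Finset.mem_sdiff, Finset.mem_union, Finset.mem_singleton, not_or,
          not_and, not_not]
        tauto) := by
  have e1 : S \ (A ∪ B) = ((S \ A) \ {i}) \ (B \ {i}) := by
    ext z
    have hz : z = i → z ∈ B := fun h => h ▸ hiB
    simp only [Finset.mem_sdiff, Finset.mem_union, Finset.mem_singleton, not_or,
      not_and, not_not]
    tauto
  have e2 : ((S \ A) \ {i}) \ (B \ {i}) = ((S \ {i}) \ A) \ (B \ {i}) := by
    rw [sdiff_sdiff_comm' S A {i}]
  have p1 : B \ {i} ⊆ (S \ A) \ {i} :=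
    Finset.sdiff_subset_sdiff (Finset.subset_sdiff.mpr ⟨hBS, hd.symm⟩)
      (Finset.Subset.refl _)
  have p2 : B \ {i} ⊆ (S \ {i}) \ A :=
    Finset.subset_sdiff.mpr ⟨Finset.sdiff_subset_sdiff hBS (Finset.Subset.refl _),
      Disjoint.mono_left Finset.sdiff_subset hd.symm⟩
  apply LinearMap.ext; intro x
  simp only [t1, A2L, LinearMap.comp_apply]
  rw [hφoff (S \ {i}) j A _ _ hjA, hφdiag (S \ A) i B _ _ hiB]
  simp only [LinearMap.comp_apply, FBModule.cast_cast_apply]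
  rw [← FBModule.cast_cast_apply N e1 e2 x,
    cast_omega_apply N ω (sdiff_sdiff_comm' S A {i}) rfl p1 p2 e2]
  try rfl

lemma nf_BN_t2 (hAS : A ⊆ S) (hBS : B ⊆ S) (hd : Disjoint A B)
    (hj : j ∈ S) (hi : i ∈ S) (hji : j ≠ i)
    (hiA : i ∉ A) (hiB : i ∈ B) (hjA : j ∉ A) (hjB : j ∉ B) :
    t2 N φ S A B j i hAS hBS hd hj hi hji hjB =
      N.cast ((sdiff_sdiff_comm' S {i} {j}).trans (sdiff_pair S j i).symm) ∘ₗ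
      A2R N α ω (S \ {i}) j A (B \ {i})
        (Finset.mem_sdiff.mpr ⟨hj, by simp [hji]⟩)
        (Finset.subset_sdiff.mpr ⟨hAS, Finset.disjoint_singleton_right.mpr hiA⟩)
        (Finset.sdiff_subset_sdiff hBS (Finset.Subset.refl _))
        (Disjoint.mono_right Finset.sdiff_subset hd)
        hjA (by simp [hjB]) ∘ₗ
      N.cast (show S \ (A ∪ B) = ((S \ {i}) \ A) \ (B \ {i}) by
        ext z
        have hz : z = i → z ∈ B := fun h => h ▸ hiB
        simp only [Finset.mem_sdiff, Finset.mem_union, Finset.mem_singleton, not_or,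
          not_and, not_not]
        tauto) := by
  have eSB : S \ B = (S \ {i}) \ (B \ {i}) := mem_sdiff_erase' S B i hiB
  have e0 : S \ (A ∪ B) = (S \ B) \ A := by
    rw [sdiff_sdiff_union', Finset.union_comm]
  have ez : (S \ B) \ A = ((S \ {i}) \ (B \ {i})) \ A := by rw [← eSB]
  have eY : (S \ B) \ {j} = ((S \ {j}) \ {i}) \ (B \ {i}) := by
    ext z
    have hz : z = i → z ∈ B := fun h => h ▸ hiB
    simp only [Finset.mem_sdiff, Finset.mem_singleton, not_and, not_not]
    tauto
  have ew : ((S \ {j}) \ {i}) \ (B \ {i}) = ((S \ {i}) \ {j}) \ (B \ {i}) := by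
    rw [sdiff_sdiff_comm' S {j} {i}]
  have pα1 : j ∈ S \ B := Finset.mem_sdiff.mpr ⟨hj, hjB⟩
  have pα2 : A ⊆ S \ B := Finset.subset_sdiff.mpr ⟨hAS, hd⟩
  have qα1 : j ∈ (S \ {i}) \ (B \ {i}) := by
    rw [← eSB]; exact pα1
  have qα2 : A ⊆ (S \ {i}) \ (B \ {i}) := by
    rw [← eSB]; exact pα2
  have pω2 : B \ {i} ⊆ (S \ {i}) \ {j} := by
    intro z hz
    simp only [Finset.mem_sdiff, Finset.mem_singleton] at hz ⊢
    exact ⟨⟨hBS hz.1, hz.2⟩, fun h => hjB (h ▸ hz.1)⟩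
  apply LinearMap.ext; intro x
  simp only [t2, A2R, LinearMap.comp_apply]
  rw [hφdiag (S \ {j}) i B _ _ hiB, hφoff (S \ B) j A _ _ hjA]
  simp only [LinearMap.comp_apply, FBModule.cast_cast_apply]
  rw [← FBModule.cast_cast_apply N e0 ez x,
    cast_alpha_apply N α eSB rfl pα1 pα2 hjA qα1 qα2 hjA ez
      (show (S \ B) \ {j} = ((S \ {i}) \ (B \ {i})) \ {j} by rw [← eSB])]
  simp only [FBModule.cast_cast_apply]
  rw [← FBModule.cast_cast_apply N eY ew,
    cast_omega_apply N ω (sdiff_sdiff_comm' S {j} {i}) rfl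
      (by intro z hz; simp only [Finset.mem_sdiff, Finset.mem_singleton] at hz ⊢
          exact ⟨⟨hBS hz.1, fun h => hjB (h ▸ hz.1)⟩, hz.2⟩) pω2 ew]
  simp only [FBModule.cast_cast_apply]
  try rfl

end NF2


section NF3
variable {k : Type} [CommRing k] (N : FBModule k)
variable (α : ∀ (S : Finset ℕ) (i : ℕ) (A : Finset ℕ), i ∈ S → A ⊆ S → i ∉ A →
    (N.M (S \ A) →ₗ[k] N.M (S \ {i})))
variable (ω : ∀ (T C : Finset ℕ), C ⊆ T → (N.M (T \ C) →ₗ[k] N.M T))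
variable (φ : ∀ (S : Finset ℕ) (i : ℕ) (B : Finset ℕ), i ∈ S → B ⊆ S →
    (N.M (S \ B) →ₗ[k] N.M (S \ {i})))
variable (hφoff : ∀ (S : Finset ℕ) (i : ℕ) (B : Finset ℕ) (hi : i ∈ S) (hB : B ⊆ S)
      (h : i ∉ B), φ S i B hi hB = α S i B hi hB h)
variable (hφdiag : ∀ (S : Finset ℕ) (i : ℕ) (B : Finset ℕ) (hi : i ∈ S) (hB : B ⊆ S)
      (h : i ∈ B),
      φ S i B hi hB =
        ω (S \ {i}) (B \ {i})
            (Finset.sdiff_subset_sdiff hB (Finset.Subset.refl _)) ∘ₗ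
          N.cast (mem_sdiff_erase' S B i h))
variable (S A B : Finset ℕ) (j i : ℕ)
include hφoff hφdiag

lemma nf_NA_t2 (hAS : A ⊆ S) (hBS : B ⊆ S) (hd : Disjoint A B)
    (hj : j ∈ S) (hi : i ∈ S) (hji : j ≠ i)
    (hiA : i ∉ A) (hiB : i ∉ B) (hjA : j ∈ A) (hjB : j ∉ B) :
    t2 N φ S A B j i hAS hBS hd hj hi hji hjB =
      N.cast (sdiff_pair S j i).symm ∘ₗ
      A2L N α ω (S \ {j}) i B (A \ {j})
        (Finset.mem_sdiff.mpr ⟨hi, by simp [Ne.symm hji]⟩)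
        (Finset.subset_sdiff.mpr ⟨hBS, Finset.disjoint_singleton_right.mpr hjB⟩)
        (Finset.sdiff_subset_sdiff hAS (Finset.Subset.refl _))
        (Disjoint.mono_right Finset.sdiff_subset hd.symm)
        hiB (by simp [hiA]) ∘ₗ
      N.cast (show S \ (A ∪ B) = ((S \ {j}) \ B) \ (A \ {j}) by
        ext z
        have hz : z = j → z ∈ A := fun h => h ▸ hjA
        simp only [Finset.mem_sdiff, Finset.mem_union, Finset.mem_singleton, not_or,
          not_and, not_not]
        tauto) := by
  have e1 : S \ (A ∪ B) = ((S \ B) \ {j}) \ (A \ {j}) := by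
    ext z
    have hz : z = j → z ∈ A := fun h => h ▸ hjA
    simp only [Finset.mem_sdiff, Finset.mem_union, Finset.mem_singleton, not_or,
      not_and, not_not]
    tauto
  have e2 : ((S \ B) \ {j}) \ (A \ {j}) = ((S \ {j}) \ B) \ (A \ {j}) := by
    rw [sdiff_sdiff_comm' S B {j}]
  have p1 : A \ {j} ⊆ (S \ B) \ {j} :=
    Finset.sdiff_subset_sdiff (Finset.subset_sdiff.mpr ⟨hAS, hd⟩)
      (Finset.Subset.refl _)
  have p2 : A \ {j} ⊆ (S \ {j}) \ B :=
    Finset.subset_sdiff.mpr ⟨Finset.sdiff_subset_sdiff hAS (Finset.Subset.refl _),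
      Disjoint.mono_left Finset.sdiff_subset hd⟩
  apply LinearMap.ext; intro x
  simp only [t2, A2L, LinearMap.comp_apply]
  rw [hφoff (S \ {j}) i B _ _ hiB, hφdiag (S \ B) j A _ _ hjA]
  simp only [LinearMap.comp_apply, FBModule.cast_cast_apply]
  rw [← FBModule.cast_cast_apply N e1 e2 x,
    cast_omega_apply N ω (sdiff_sdiff_comm' S B {j}) rfl p1 p2 e2]
  try rfl

lemma nf_NA_t1 (hAS : A ⊆ S) (hBS : B ⊆ S) (hd : Disjoint A B)
    (hj : j ∈ S) (hi : i ∈ S) (hji : j ≠ i)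
    (hiA : i ∉ A) (hiB : i ∉ B) (hjA : j ∈ A) (hjB : j ∉ B) :
    t1 N φ S A B j i hAS hBS hd hj hi hji hiA =
      N.cast (sdiff_pair S j i).symm ∘ₗ
      A2R N α ω (S \ {j}) i B (A \ {j})
        (Finset.mem_sdiff.mpr ⟨hi, by simp [Ne.symm hji]⟩)
        (Finset.subset_sdiff.mpr ⟨hBS, Finset.disjoint_singleton_right.mpr hjB⟩)
        (Finset.sdiff_subset_sdiff hAS (Finset.Subset.refl _))
        (Disjoint.mono_right Finset.sdiff_subset hd.symm)
        hiB (by simp [hiA]) ∘ₗ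
      N.cast (show S \ (A ∪ B) = ((S \ {j}) \ B) \ (A \ {j}) by
        ext z
        have hz : z = j → z ∈ A := fun h => h ▸ hjA
        simp only [Finset.mem_sdiff, Finset.mem_union, Finset.mem_singleton, not_or,
          not_and, not_not]
        tauto) := by
  have eSA : S \ A = (S \ {j}) \ (A \ {j}) := mem_sdiff_erase' S A j hjA
  have e0 : S \ (A ∪ B) = (S \ A) \ B := (sdiff_sdiff_union' S A B).symm
  have ez : (S \ A) \ B = ((S \ {j}) \ (A \ {j})) \ B := by rw [← eSA]
  have eY : (S \ A) \ {i} = ((S \ {i}) \ {j}) \ (A \ {j}) := by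
    ext z
    have hz : z = j → z ∈ A := fun h => h ▸ hjA
    simp only [Finset.mem_sdiff, Finset.mem_singleton, not_and, not_not]
    tauto
  have ew : ((S \ {i}) \ {j}) \ (A \ {j}) = ((S \ {j}) \ {i}) \ (A \ {j}) := by
    rw [sdiff_sdiff_comm' S {i} {j}]
  have pα1 : i ∈ S \ A := Finset.mem_sdiff.mpr ⟨hi, hiA⟩
  have pα2 : B ⊆ S \ A := Finset.subset_sdiff.mpr ⟨hBS, hd.symm⟩
  have qα1 : i ∈ (S \ {j}) \ (A \ {j}) := by rw [← eSA]; exact pα1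
  have qα2 : B ⊆ (S \ {j}) \ (A \ {j}) := by rw [← eSA]; exact pα2
  have pω2 : A \ {j} ⊆ (S \ {j}) \ {i} := by
    intro z hz
    simp only [Finset.mem_sdiff, Finset.mem_singleton] at hz ⊢
    exact ⟨⟨hAS hz.1, hz.2⟩, fun h => hiA (h ▸ hz.1)⟩
  apply LinearMap.ext; intro x
  simp only [t1, A2R, LinearMap.comp_apply]
  rw [hφdiag (S \ {i}) j A _ _ hjA, hφoff (S \ A) i B _ _ hiB]
  simp only [LinearMap.comp_apply, FBModule.cast_cast_apply]
  rw [← FBModule.cast_cast_apply N e0 ez x,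
    cast_alpha_apply N α eSA rfl pα1 pα2 hiB qα1 qα2 hiB ez
      (show (S \ A) \ {i} = ((S \ {j}) \ (A \ {j})) \ {i} by rw [← eSA])]
  simp only [FBModule.cast_cast_apply]
  rw [← FBModule.cast_cast_apply N eY ew,
    cast_omega_apply N ω (sdiff_sdiff_comm' S {i} {j}) rfl
      (by intro z hz; simp only [Finset.mem_sdiff, Finset.mem_singleton] at hz ⊢
          exact ⟨⟨hAS hz.1, fun h => hiA (h ▸ hz.1)⟩, hz.2⟩) pω2 ew]
  simp only [FBModule.cast_cast_apply]
  try rfl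

lemma nf_BB_t1 (hAS : A ⊆ S) (hBS : B ⊆ S) (hd : Disjoint A B)
    (hj : j ∈ S) (hi : i ∈ S) (hji : j ≠ i)
    (hiA : i ∉ A) (hiB : i ∈ B) (hjA : j ∉ A) (hjB : j ∈ B) :
    t1 N φ S A B j i hAS hBS hd hj hi hji hiA =
      N.cast ((sdiff_sdiff_comm' S {i} {j}).trans (sdiff_pair S j i).symm) ∘ₗ
      CcL N α ω (S \ {i}) A (B \ {i}) j
        (Finset.subset_sdiff.mpr ⟨hAS, Finset.disjoint_singleton_right.mpr hiA⟩)
        (Finset.sdiff_subset_sdiff hBS (Finset.Subset.refl _))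
        (Disjoint.mono_right Finset.sdiff_subset hd)
        (Finset.mem_sdiff.mpr ⟨hjB, by simp [hji]⟩) ∘ₗ
      N.cast (show S \ (A ∪ B) = ((S \ {i}) \ A) \ (B \ {i}) by
        ext z
        have hz : z = i → z ∈ B := fun h => h ▸ hiB
        simp only [Finset.mem_sdiff, Finset.mem_union, Finset.mem_singleton, not_or,
          not_and, not_not]
        tauto) := by
  have e1 : S \ (A ∪ B) = ((S \ A) \ {i}) \ (B \ {i}) := by
    ext z
    have hz : z = i → z ∈ B := fun h => h ▸ hiB
    simp only [Finset.mem_sdiff, Finset.mem_union, Finset.mem_singleton, not_or,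
      not_and, not_not]
    tauto
  have e2 : ((S \ A) \ {i}) \ (B \ {i}) = ((S \ {i}) \ A) \ (B \ {i}) := by
    rw [sdiff_sdiff_comm' S A {i}]
  have p1 : B \ {i} ⊆ (S \ A) \ {i} :=
    Finset.sdiff_subset_sdiff (Finset.subset_sdiff.mpr ⟨hBS, hd.symm⟩)
      (Finset.Subset.refl _)
  have p2 : B \ {i} ⊆ (S \ {i}) \ A :=
    Finset.subset_sdiff.mpr ⟨Finset.sdiff_subset_sdiff hBS (Finset.Subset.refl _),
      Disjoint.mono_left Finset.sdiff_subset hd.symm⟩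
  apply LinearMap.ext; intro x
  simp only [t1, CcL, LinearMap.comp_apply]
  rw [hφoff (S \ {i}) j A _ _ hjA, hφdiag (S \ A) i B _ _ hiB]
  simp only [LinearMap.comp_apply, FBModule.cast_cast_apply]
  rw [← FBModule.cast_cast_apply N e1 e2 x,
    cast_omega_apply N ω (sdiff_sdiff_comm' S A {i}) rfl p1 p2 e2]
  try rfl

lemma nf_AA_t2 (hAS : A ⊆ S) (hBS : B ⊆ S) (hd : Disjoint A B)
    (hj : j ∈ S) (hi : i ∈ S) (hji : j ≠ i)
    (hiA : i ∈ A) (hiB : i ∉ B) (hjA : j ∈ A) (hjB : j ∉ B) :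
    t2 N φ S A B j i hAS hBS hd hj hi hji hjB =
      N.cast (sdiff_pair S j i).symm ∘ₗ
      CcL N α ω (S \ {j}) B (A \ {j}) i
        (Finset.subset_sdiff.mpr ⟨hBS, Finset.disjoint_singleton_right.mpr hjB⟩)
        (Finset.sdiff_subset_sdiff hAS (Finset.Subset.refl _))
        (Disjoint.mono_right Finset.sdiff_subset hd.symm)
        (Finset.mem_sdiff.mpr ⟨hiA, by simp [Ne.symm hji]⟩) ∘ₗ
      N.cast (show S \ (A ∪ B) = ((S \ {j}) \ B) \ (A \ {j}) by
        ext z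
        have hz : z = j → z ∈ A := fun h => h ▸ hjA
        simp only [Finset.mem_sdiff, Finset.mem_union, Finset.mem_singleton, not_or,
          not_and, not_not]
        tauto) := by
  have e1 : S \ (A ∪ B) = ((S \ B) \ {j}) \ (A \ {j}) := by
    ext z
    have hz : z = j → z ∈ A := fun h => h ▸ hjA
    simp only [Finset.mem_sdiff, Finset.mem_union, Finset.mem_singleton, not_or,
      not_and, not_not]
    tauto
  have e2 : ((S \ B) \ {j}) \ (A \ {j}) = ((S \ {j}) \ B) \ (A \ {j}) := by
    rw [sdiff_sdiff_comm' S B {j}]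
  have p1 : A \ {j} ⊆ (S \ B) \ {j} :=
    Finset.sdiff_subset_sdiff (Finset.subset_sdiff.mpr ⟨hAS, hd⟩)
      (Finset.Subset.refl _)
  have p2 : A \ {j} ⊆ (S \ {j}) \ B :=
    Finset.subset_sdiff.mpr ⟨Finset.sdiff_subset_sdiff hAS (Finset.Subset.refl _),
      Disjoint.mono_left Finset.sdiff_subset hd⟩
  apply LinearMap.ext; intro x
  simp only [t2, CcL, LinearMap.comp_apply]
  rw [hφoff (S \ {j}) i B _ _ hiB, hφdiag (S \ B) j A _ _ hjA]
  simp only [LinearMap.comp_apply, FBModule.cast_cast_apply]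
  rw [← FBModule.cast_cast_apply N e1 e2 x,
    cast_omega_apply N ω (sdiff_sdiff_comm' S B {j}) rfl p1 p2 e2]
  try rfl

end NF3


section NF4
variable {k : Type} [CommRing k] (N : FBModule k)
variable (α : ∀ (S : Finset ℕ) (i : ℕ) (A : Finset ℕ), i ∈ S → A ⊆ S → i ∉ A →
    (N.M (S \ A) →ₗ[k] N.M (S \ {i})))
variable (ω : ∀ (T C : Finset ℕ), C ⊆ T → (N.M (T \ C) →ₗ[k] N.M T))
variable (φ : ∀ (S : Finset ℕ) (i : ℕ) (B : Finset ℕ), i ∈ S → B ⊆ S →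
    (N.M (S \ B) →ₗ[k] N.M (S \ {i})))
variable (hφoff : ∀ (S : Finset ℕ) (i : ℕ) (B : Finset ℕ) (hi : i ∈ S) (hB : B ⊆ S)
      (h : i ∉ B), φ S i B hi hB = α S i B hi hB h)
variable (hφdiag : ∀ (S : Finset ℕ) (i : ℕ) (B : Finset ℕ) (hi : i ∈ S) (hB : B ⊆ S)
      (h : i ∈ B),
      φ S i B hi hB =
        ω (S \ {i}) (B \ {i})
            (Finset.sdiff_subset_sdiff hB (Finset.Subset.refl _)) ∘ₗ
          N.cast (mem_sdiff_erase' S B i h))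
variable (S A B : Finset ℕ) (j i : ℕ)
include hφoff hφdiag

lemma nf_BB_t3 (hAS : A ⊆ S) (hBS : B ⊆ S) (hd : Disjoint A B)
    (hj : j ∈ S) (hi : i ∈ S) (hji : j ≠ i)
    (hiA : i ∉ A) (hiB : i ∈ B) (hjA : j ∉ A) (hjB : j ∈ B) :
    t3 N φ S A B j i hAS hBS hd hj hi hji hjB =
      N.cast ((sdiff_sdiff_comm' S {i} {j}).trans (sdiff_pair S j i).symm) ∘ₗ
      CcR N ω (S \ {i}) A (B \ {i}) j
        (Finset.subset_sdiff.mpr ⟨hAS, Finset.disjoint_singleton_right.mpr hiA⟩)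
        (Finset.sdiff_subset_sdiff hBS (Finset.Subset.refl _))
        (Disjoint.mono_right Finset.sdiff_subset hd)
        (Finset.mem_sdiff.mpr ⟨hjB, by simp [hji]⟩) ∘ₗ
      N.cast (show S \ (A ∪ B) = ((S \ {i}) \ A) \ (B \ {i}) by
        ext z
        have hz : z = i → z ∈ B := fun h => h ▸ hiB
        simp only [Finset.mem_sdiff, Finset.mem_union, Finset.mem_singleton, not_or,
          not_and, not_not]
        tauto) := by
  have X3 : S \ (A ∪ B) = ((S \ {j}) \ {i}) \ (((A ∪ B) \ {j}) \ {i}) := by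
    ext z
    have hz1 : z = j → z ∈ B := fun h => h ▸ hjB
    have hz2 : z = i → z ∈ B := fun h => h ▸ hiB
    simp only [Finset.mem_sdiff, Finset.mem_union, Finset.mem_singleton, not_or,
      not_and, not_not]
    tauto
  have hC : ((A ∪ B) \ {j}) \ {i} = (A ∪ (B \ {i})) \ {j} := by
    ext z
    have hz : z = i → z ∉ A := fun h => h ▸ hiA
    simp only [Finset.mem_sdiff, Finset.mem_union, Finset.mem_singleton, not_and]
    tauto
  have hs : ((S \ {j}) \ {i}) \ (((A ∪ B) \ {j}) \ {i}) =
      ((S \ {i}) \ {j}) \ ((A ∪ (B \ {i})) \ {j}) := by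
    rw [← hC, sdiff_sdiff_comm' S {j} {i}]
  have p : ((A ∪ B) \ {j}) \ {i} ⊆ (S \ {j}) \ {i} :=
    Finset.sdiff_subset_sdiff
      (Finset.sdiff_subset_sdiff (Finset.union_subset hAS hBS) (Finset.Subset.refl _))
      (Finset.Subset.refl _)
  apply LinearMap.ext; intro x
  simp only [t3, CcR, LinearMap.comp_apply]
  rw [hφdiag (S \ {j}) i ((A ∪ B) \ {j}) _ _
    (Finset.mem_sdiff.mpr ⟨Finset.mem_union_right _ hiB, by simp [Ne.symm hji]⟩)]
  simp only [LinearMap.comp_apply, FBModule.cast_cast_apply]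
  rw [← FBModule.cast_cast_apply N X3 hs x,
    cast_omega_apply N ω (sdiff_sdiff_comm' S {j} {i}) hC p _ hs]
  try simp only [FBModule.cast_cast_apply]
  try rfl

lemma nf_AA_t4 (hAS : A ⊆ S) (hBS : B ⊆ S) (hd : Disjoint A B)
    (hj : j ∈ S) (hi : i ∈ S) (hji : j ≠ i)
    (hiA : i ∈ A) (hiB : i ∉ B) (hjA : j ∈ A) (hjB : j ∉ B) :
    t4 N φ S A B j i hAS hBS hd hj hi hji hiA =
      N.cast (sdiff_pair S j i).symm ∘ₗ
      CcR N ω (S \ {j}) B (A \ {j}) i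
        (Finset.subset_sdiff.mpr ⟨hBS, Finset.disjoint_singleton_right.mpr hjB⟩)
        (Finset.sdiff_subset_sdiff hAS (Finset.Subset.refl _))
        (Disjoint.mono_right Finset.sdiff_subset hd.symm)
        (Finset.mem_sdiff.mpr ⟨hiA, by simp [Ne.symm hji]⟩) ∘ₗ
      N.cast (show S \ (A ∪ B) = ((S \ {j}) \ B) \ (A \ {j}) by
        ext z
        have hz : z = j → z ∈ A := fun h => h ▸ hjA
        simp only [Finset.mem_sdiff, Finset.mem_union, Finset.mem_singleton, not_or,
          not_and, not_not]
        tauto) := by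
  have X4 : S \ (A ∪ B) = ((S \ {i}) \ {j}) \ (((B ∪ A) \ {i}) \ {j}) := by
    ext z
    have hz1 : z = i → z ∈ A := fun h => h ▸ hiA
    have hz2 : z = j → z ∈ A := fun h => h ▸ hjA
    simp only [Finset.mem_sdiff, Finset.mem_union, Finset.mem_singleton, not_or,
      not_and, not_not]
    tauto
  have hC : ((B ∪ A) \ {i}) \ {j} = (B ∪ (A \ {j})) \ {i} := by
    ext z
    have hz : z = j → z ∉ B := fun h => h ▸ hjB
    simp only [Finset.mem_sdiff, Finset.mem_union, Finset.mem_singleton, not_and]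
    tauto
  have hs : ((S \ {i}) \ {j}) \ (((B ∪ A) \ {i}) \ {j}) =
      ((S \ {j}) \ {i}) \ ((B ∪ (A \ {j})) \ {i}) := by
    rw [← hC, sdiff_sdiff_comm' S {i} {j}]
  have p : ((B ∪ A) \ {i}) \ {j} ⊆ (S \ {i}) \ {j} :=
    Finset.sdiff_subset_sdiff
      (Finset.sdiff_subset_sdiff (Finset.union_subset hBS hAS) (Finset.Subset.refl _))
      (Finset.Subset.refl _)
  apply LinearMap.ext; intro x
  simp only [t4, CcR, LinearMap.comp_apply]
  rw [hφdiag (S \ {i}) j ((B ∪ A) \ {i}) _ _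
    (Finset.mem_sdiff.mpr ⟨Finset.mem_union_right _ hjA, by simp [hji]⟩)]
  simp only [LinearMap.comp_apply, FBModule.cast_cast_apply]
  rw [← FBModule.cast_cast_apply N X4 hs x,
    cast_omega_apply N ω (sdiff_sdiff_comm' S {i} {j}) hC p _ hs]
  try simp only [FBModule.cast_cast_apply]
  try rfl

lemma nf_AB (hAS : A ⊆ S) (hBS : B ⊆ S) (hd : Disjoint A B)
    (hj : j ∈ S) (hi : i ∈ S) (hji : j ≠ i)
    (hiA : i ∈ A) (hjB : j ∈ B) :
    t3 N φ S A B j i hAS hBS hd hj hi hji hjB =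
      t4 N φ S A B j i hAS hBS hd hj hi hji hiA := by
  have X3 : S \ (A ∪ B) = ((S \ {j}) \ {i}) \ (((A ∪ B) \ {j}) \ {i}) := by
    ext z
    have hz1 : z = j → z ∈ B := fun h => h ▸ hjB
    have hz2 : z = i → z ∈ A := fun h => h ▸ hiA
    simp only [Finset.mem_sdiff, Finset.mem_union, Finset.mem_singleton, not_or,
      not_and, not_not]
    tauto
  have hC : ((A ∪ B) \ {j}) \ {i} = ((B ∪ A) \ {i}) \ {j} := by
    ext z
    simp only [Finset.mem_sdiff, Finset.mem_union, Finset.mem_singleton]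
    tauto
  have hs : ((S \ {j}) \ {i}) \ (((A ∪ B) \ {j}) \ {i}) =
      ((S \ {i}) \ {j}) \ (((B ∪ A) \ {i}) \ {j}) := by
    rw [← hC, sdiff_sdiff_comm' S {j} {i}]
  have p : ((A ∪ B) \ {j}) \ {i} ⊆ (S \ {j}) \ {i} :=
    Finset.sdiff_subset_sdiff
      (Finset.sdiff_subset_sdiff (Finset.union_subset hAS hBS) (Finset.Subset.refl _))
      (Finset.Subset.refl _)
  apply LinearMap.ext; intro x
  simp only [t3, t4, LinearMap.comp_apply]
  rw [hφdiag (S \ {j}) i ((A ∪ B) \ {j}) _ _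
    (Finset.mem_sdiff.mpr ⟨Finset.mem_union_left _ hiA, by simp [Ne.symm hji]⟩),
    hφdiag (S \ {i}) j ((B ∪ A) \ {i}) _ _
    (Finset.mem_sdiff.mpr ⟨Finset.mem_union_left _ hjB, by simp [hji]⟩)]
  simp only [LinearMap.comp_apply, FBModule.cast_cast_apply]
  rw [← FBModule.cast_cast_apply N X3 hs x,
    cast_omega_apply N ω (sdiff_sdiff_comm' S {j} {i}) hC p _ hs]
  try simp only [FBModule.cast_cast_apply]
  try rfl

lemma nf_BA_t1 (hAS : A ⊆ S) (hBS : B ⊆ S) (hd : Disjoint A B)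
    (hj : j ∈ S) (hi : i ∈ S) (hji : j ≠ i)
    (hiA : i ∉ A) (hiB : i ∈ B) (hjA : j ∈ A) (hjB : j ∉ B) :
    t1 N φ S A B j i hAS hBS hd hj hi hji hiA =
      N.cast ((sdiff_sdiff_comm' S {i} {j}).trans (sdiff_pair S j i).symm) ∘ₗ
      A3L N ω ((S \ {i}) \ {j}) (A \ {j}) (B \ {i})
        (by intro z hz
            simp only [Finset.mem_sdiff, Finset.mem_singleton] at hz ⊢
            exact ⟨⟨hAS hz.1, fun h => hiA (h ▸ hz.1)⟩, hz.2⟩)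
        (by intro z hz
            simp only [Finset.mem_sdiff, Finset.mem_singleton] at hz ⊢
            exact ⟨⟨hBS hz.1, hz.2⟩, fun h => hjB (h ▸ hz.1)⟩)
        (Disjoint.mono Finset.sdiff_subset Finset.sdiff_subset hd) ∘ₗ
      N.cast (show S \ (A ∪ B) =
          (((S \ {i}) \ {j}) \ (A \ {j})) \ (B \ {i}) by
        ext z
        have hz1 : z = i → z ∈ B := fun h => h ▸ hiB
        have hz2 : z = j → z ∈ A := fun h => h ▸ hjA
        simp only [Finset.mem_sdiff, Finset.mem_union, Finset.mem_singleton, not_or,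
          not_and, not_not]
        tauto) := by
  have X : S \ (A ∪ B) = ((S \ A) \ {i}) \ (B \ {i}) := by
    ext z
    have hz : z = i → z ∈ B := fun h => h ▸ hiB
    simp only [Finset.mem_sdiff, Finset.mem_union, Finset.mem_singleton, not_or,
      not_and, not_not]
    tauto
  have hT0 : (S \ A) \ {i} = ((S \ {i}) \ {j}) \ (A \ {j}) := by
    rw [sdiff_sdiff_comm' S A {i}]
    exact mem_sdiff_erase' (S \ {i}) A j hjA
  have hs0 : ((S \ A) \ {i}) \ (B \ {i}) =
      (((S \ {i}) \ {j}) \ (A \ {j})) \ (B \ {i}) := by rw [hT0]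
  have p : B \ {i} ⊆ (S \ A) \ {i} :=
    Finset.sdiff_subset_sdiff (Finset.subset_sdiff.mpr ⟨hBS, hd.symm⟩)
      (Finset.Subset.refl _)
  apply LinearMap.ext; intro x
  simp only [t1, A3L, LinearMap.comp_apply]
  rw [hφdiag (S \ {i}) j A _ _ hjA, hφdiag (S \ A) i B _ _ hiB]
  simp only [LinearMap.comp_apply, FBModule.cast_cast_apply]
  rw [← FBModule.cast_cast_apply N X hs0 x,
    cast_omega_apply N ω hT0 rfl p _ hs0]
  try simp only [FBModule.cast_cast_apply]
  try rfl

lemma nf_BA_t2 (hAS : A ⊆ S) (hBS : B ⊆ S) (hd : Disjoint A B)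
    (hj : j ∈ S) (hi : i ∈ S) (hji : j ≠ i)
    (hiA : i ∉ A) (hiB : i ∈ B) (hjA : j ∈ A) (hjB : j ∉ B) :
    t2 N φ S A B j i hAS hBS hd hj hi hji hjB =
      N.cast ((sdiff_sdiff_comm' S {i} {j}).trans (sdiff_pair S j i).symm) ∘ₗ
      A3R N ω ((S \ {i}) \ {j}) (A \ {j}) (B \ {i})
        (by intro z hz
            simp only [Finset.mem_sdiff, Finset.mem_singleton] at hz ⊢
            exact ⟨⟨hAS hz.1, fun h => hiA (h ▸ hz.1)⟩, hz.2⟩)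
        (by intro z hz
            simp only [Finset.mem_sdiff, Finset.mem_singleton] at hz ⊢
            exact ⟨⟨hBS hz.1, hz.2⟩, fun h => hjB (h ▸ hz.1)⟩)
        (Disjoint.mono Finset.sdiff_subset Finset.sdiff_subset hd) ∘ₗ
      N.cast (show S \ (A ∪ B) =
          (((S \ {i}) \ {j}) \ (A \ {j})) \ (B \ {i}) by
        ext z
        have hz1 : z = i → z ∈ B := fun h => h ▸ hiB
        have hz2 : z = j → z ∈ A := fun h => h ▸ hjA
        simp only [Finset.mem_sdiff, Finset.mem_union, Finset.mem_singleton, not_or,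
          not_and, not_not]
        tauto) := by
  have X' : S \ (A ∪ B) = ((S \ B) \ {j}) \ (A \ {j}) := by
    ext z
    have hz : z = j → z ∈ A := fun h => h ▸ hjA
    simp only [Finset.mem_sdiff, Finset.mem_union, Finset.mem_singleton, not_or,
      not_and, not_not]
    tauto
  have hT1 : (S \ B) \ {j} = ((S \ {i}) \ {j}) \ (B \ {i}) := by
    ext z
    have hz : z = i → z ∈ B := fun h => h ▸ hiB
    simp only [Finset.mem_sdiff, Finset.mem_singleton, not_and, not_not]
    tauto
  have hs1 : ((S \ B) \ {j}) \ (A \ {j}) =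
      (((S \ {i}) \ {j}) \ (B \ {i})) \ (A \ {j}) := by rw [hT1]
  have p1 : A \ {j} ⊆ (S \ B) \ {j} :=
    Finset.sdiff_subset_sdiff (Finset.subset_sdiff.mpr ⟨hAS, hd⟩)
      (Finset.Subset.refl _)
  have Y' : (S \ B) \ {j} = ((S \ {j}) \ {i}) \ (B \ {i}) := by
    ext z
    have hz : z = i → z ∈ B := fun h => h ▸ hiB
    simp only [Finset.mem_sdiff, Finset.mem_singleton, not_and, not_not]
    tauto
  have hs2 : ((S \ {j}) \ {i}) \ (B \ {i}) = ((S \ {i}) \ {j}) \ (B \ {i}) := by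
    rw [sdiff_sdiff_comm' S {j} {i}]
  have p2 : B \ {i} ⊆ (S \ {j}) \ {i} := by
    intro z hz
    simp only [Finset.mem_sdiff, Finset.mem_singleton] at hz ⊢
    exact ⟨⟨hBS hz.1, fun h => hjB (h ▸ hz.1)⟩, hz.2⟩
  apply LinearMap.ext; intro x
  simp only [t2, A3R, LinearMap.comp_apply]
  rw [hφdiag (S \ {j}) i B _ _ hiB, hφdiag (S \ B) j A _ _ hjA]
  simp only [LinearMap.comp_apply, FBModule.cast_cast_apply]
  rw [← FBModule.cast_cast_apply N X' hs1 x,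
    cast_omega_apply N ω hT1 rfl p1 _ hs1]
  rw [← FBModule.cast_cast_apply N Y' hs2,
    cast_omega_apply N ω (sdiff_sdiff_comm' S {j} {i}) rfl p2 _ hs2]
  try simp only [FBModule.cast_cast_apply]
  try rfl

end NF4


/-- with `α` a natural simple symmetric `(1,*)`-operation, `ω` a natural
symmetric `(0,*)`-operation on an FB-module `M`, and `φ` the combined family
(`φ^S_{i,B} = α^S_{i,B}` for `i ∉ B`, `φ^S_{i,B} = ω^{S∖i}_{B∖i}` for `i ∈ B`), the
identity `v∘u − v′∘u′ = v′∘w − σ_P∘v′∘w∘σ_N` holds as maps `N₂(S) → P(S)` for every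
finite set `S` if and only if (a) `α` and `ω` commute with themselves and each other,
(b) `α^{S∖i}_{j,A}∘α^{S∖A}_{i,B} = α^{S∖j}_{i,(A∪B)∖j}`, and
(c) `α^S_{j,A}∘ω^{S∖A}_B = ω^{S∖j}_{(A∪B)∖j}`; i.e. exactly when `(α, ω)` defines a
representation of the curried Witt algebra on the standard FB-module. -/
theorem statement16
    (α : ∀ (S : Finset ℕ) (i : ℕ) (A : Finset ℕ), i ∈ S → A ⊆ S → i ∉ A →
      (N.M (S \ A) →ₗ[k] N.M (S \ {i})))
    (hαnat : ∀ (f : ℕ → ℕ) (S T : Finset ℕ) (i : ℕ) (A : Finset ℕ)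
      (hi : i ∈ S) (hA : A ⊆ S) (hiA : i ∉ A)
      (hf : Set.InjOn f S) (hT : S.image f = T)
      (hi' : f i ∈ T) (hA' : A.image f ⊆ T) (hiA' : f i ∉ A.image f)
      (h1 : Set.InjOn f ((S \ A : Finset ℕ) : Set ℕ))
      (h2 : (S \ A).image f = T \ A.image f)
      (h3 : Set.InjOn f ((S \ {i} : Finset ℕ) : Set ℕ))
      (h4 : (S \ {i}).image f = T \ {f i}),
      N.map f (S \ {i}) (T \ {f i}) h3 h4 ∘ₗ α S i A hi hA hiA =
        α T (f i) (A.image f) hi' hA' hiA' ∘ₗ N.map f (S \ A) (T \ A.image f) h1 h2)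
    (ω : ∀ (T C : Finset ℕ), C ⊆ T → (N.M (T \ C) →ₗ[k] N.M T))
    (hωnat : ∀ (f : ℕ → ℕ) (T T' C : Finset ℕ) (hC : C ⊆ T)
      (hf : Set.InjOn f T) (hT' : T.image f = T') (hC' : C.image f ⊆ T')
      (h1 : Set.InjOn f ((T \ C : Finset ℕ) : Set ℕ))
      (h2 : (T \ C).image f = T' \ C.image f),
      N.map f T T' hf hT' ∘ₗ ω T C hC =
        ω T' (C.image f) hC' ∘ₗ N.map f (T \ C) (T' \ C.image f) h1 h2)
    (φ : ∀ (S : Finset ℕ) (i : ℕ) (B : Finset ℕ), i ∈ S → B ⊆ S →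
      (N.M (S \ B) →ₗ[k] N.M (S \ {i})))
    (hφoff : ∀ (S : Finset ℕ) (i : ℕ) (B : Finset ℕ) (hi : i ∈ S) (hB : B ⊆ S)
      (h : i ∉ B), φ S i B hi hB = α S i B hi hB h)
    (hφdiag : ∀ (S : Finset ℕ) (i : ℕ) (B : Finset ℕ) (hi : i ∈ S) (hB : B ⊆ S)
      (h : i ∈ B),
      φ S i B hi hB =
        ω (S \ {i}) (B \ {i})
            (Finset.sdiff_subset_sdiff hB (Finset.Subset.refl _)) ∘ₗ
          N.cast (mem_sdiff_erase' S B i h)) :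
    (∀ S : Finset ℕ,
      vMap N φ S ∘ₗ uMap N φ S - v'Map N φ S ∘ₗ u'Map N φ S =
        v'Map N φ S ∘ₗ wMap N S - σP N S ∘ₗ v'Map N φ S ∘ₗ wMap N S ∘ₗ σN N S) ↔
    (CondA1 N α ∧ CondA2 N α ω ∧ CondA3 N ω ∧ CondBc N α ∧ CondCc N α ω) := by
  constructor
  · intro hid
    have key : ∀ (S A B : Finset ℕ) (hAS : A ⊆ S) (hBS : B ⊆ S) (hd : Disjoint A B)
        (j i : ℕ) (hj : j ∈ S) (hi : i ∈ S) (hji : j ≠ i),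
        keyT N φ S A B j i hAS hBS hd hj hi hji = 0 := by
      intro S A B hAS hBS hd j i hj hi hji
      apply LinearMap.ext; intro x
      have h := LinearMap.congr_fun (hid S)
        (DirectSum.lof k (ιN2 S) (fun p => N.M (S \ (p.1.1 ∪ p.1.2)))
          ⟨(A, B), hAS, hBS, hd⟩ x)
      simp only [LinearMap.sub_apply, LinearMap.comp_apply] at h
      have h2 := congrArg (pc N S ⟨(j, i), hj, hi, hji⟩) h
      erw [map_sub, map_sub] at h2
      erw [vu_component N φ S A B j i hAS hBS hd hj hi hji x,
        v'u'_component N φ S A B j i hAS hBS hd hj hi hji x,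
        v'w_component N φ S A B j i hAS hBS hd hj hi hji x,
        sigma_component N φ S A B j i hAS hBS hd hj hi hji x] at h2
      simp only [keyT, LinearMap.sub_apply, LinearMap.add_apply, LinearMap.zero_apply]
      rw [h2]
      abel
    refine ⟨?_, ?_, ?_, ?_, ?_⟩
    · -- CondA1
      rw [condA1_iff N α]
      intro S i kk A C hi hk hik hA hC hAC hiA hiC hkA hkC
      have hk0 := key S A C hA hC hAC i kk hi hk hik
      simp only [keyT, dif_neg hkA, dif_neg hiC] at hk0
      rw [add_zero, sub_zero, sub_eq_zero] at hk0
      rw [nf_NN_t1 N α ω φ hφoff hφdiag S A C i kk hA hC hAC hi hk hik hkA hkC hiA hiC,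
        nf_NN_t2 N α ω φ hφoff hφdiag S A C i kk hA hC hAC hi hk hik hkA hkC hiA hiC]
        at hk0
      exact (conj_inj N _ _ _ _).mp hk0
    · -- CondA2
      rw [condA2_iff N α ω]
      intro S i A C hi hA hC hAC hiA hiC
      obtain ⟨n, hnS⟩ := Infinite.exists_notMem_finset S
      have hS' : insert n S \ {n} = S := by
        ext z; simp only [Finset.mem_sdiff, Finset.mem_insert, Finset.mem_singleton]
        constructor
        · rintro ⟨h1 | h1, h2⟩
          · exact absurd h1 h2
          · exact h1
        · intro h; exact ⟨Or.inr h, fun e => hnS (e ▸ h)⟩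
      have hC' : insert n C \ {n} = C := by
        ext z; simp only [Finset.mem_sdiff, Finset.mem_insert, Finset.mem_singleton]
        constructor
        · rintro ⟨h1 | h1, h2⟩
          · exact absurd h1 h2
          · exact h1
        · intro h; exact ⟨Or.inr h, fun e => hnS (e ▸ hC h)⟩
      have hAS' : A ⊆ insert n S := hA.trans (Finset.subset_insert _ _)
      have hBS' : insert n C ⊆ insert n S := Finset.insert_subset_insert _ hC
      have hnA : n ∉ A := fun h => hnS (hA h)
      have hd' : Disjoint A (insert n C) := by
        rw [Finset.disjoint_insert_right]
        exact ⟨hnA, hAC⟩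
      have hiS' : i ∈ insert n S := Finset.mem_insert_of_mem hi
      have hnS' : n ∈ insert n S := Finset.mem_insert_self _ _
      have hin : i ≠ n := fun e => hnS (e ▸ hi)
      have hk0 := key (insert n S) A (insert n C) hAS' hBS' hd' i n hiS' hnS' hin
      have hnB' : n ∈ insert n C := Finset.mem_insert_self _ _
      have hiB' : i ∉ insert n C := by
        simp only [Finset.mem_insert, not_or]; exact ⟨hin, hiC⟩
      simp only [keyT, dif_neg hnA, dif_neg hiB'] at hk0
      rw [add_zero, sub_zero, sub_eq_zero] at hk0
      rw [nf_BN_t1 N α ω φ hφoff hφdiag (insert n S) A (insert n C) i n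
          hAS' hBS' hd' hiS' hnS' hin hnA hnB' hiA hiB',
        nf_BN_t2 N α ω φ hφoff hφdiag (insert n S) A (insert n C) i n
          hAS' hBS' hd' hiS' hnS' hin hnA hnB' hiA hiB'] at hk0
      have hk1 := (conj_inj N _ _ _ _).mp hk0
      exact A2_transport N α ω hS' rfl hC' _ _ _ _ _ _ hi hA hC hAC hiA hiC hk1
    · -- CondA3
      rw [condA3_iff N ω]
      intro T C D hC hD hCD
      obtain ⟨n, hnT⟩ := Infinite.exists_notMem_finset T
      obtain ⟨m, hmT⟩ := Infinite.exists_notMem_finset (insert n T)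
      have hmn : m ≠ n := fun e => hmT (e ▸ Finset.mem_insert_self _ _)
      have hmT' : m ∉ T := fun h => hmT (Finset.mem_insert_of_mem h)
      -- S = insert n (insert m T), A = insert m C, B = insert n D, i = n, j = m
      set S : Finset ℕ := insert n (insert m T) with hSdef
      have hnS : n ∈ S := Finset.mem_insert_self _ _
      have hmS : m ∈ S := Finset.mem_insert_of_mem (Finset.mem_insert_self _ _)
      have hmn' : m ≠ n := hmn
      have hT1 : (S \ {n}) \ {m} = T := by
        ext z
        simp only [hSdef, Finset.mem_sdiff, Finset.mem_insert, Finset.mem_singleton]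
        constructor
        · rintro ⟨⟨h1 | h1 | h1, h2⟩, h3⟩
          · exact absurd h1 h2
          · exact absurd h1 h3
          · exact h1
        · intro h
          exact ⟨⟨Or.inr (Or.inr h), fun e => hnT (e ▸ h)⟩, fun e => hmT' (e ▸ h)⟩
      have hC1 : insert m C \ {m} = C := by
        ext z; simp only [Finset.mem_sdiff, Finset.mem_insert, Finset.mem_singleton]
        constructor
        · rintro ⟨h1 | h1, h2⟩
          · exact absurd h1 h2
          · exact h1
        · intro h; exact ⟨Or.inr h, fun e => hmT' (e ▸ hC h)⟩
      have hD1 : insert n D \ {n} = D := by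
        ext z; simp only [Finset.mem_sdiff, Finset.mem_insert, Finset.mem_singleton]
        constructor
        · rintro ⟨h1 | h1, h2⟩
          · exact absurd h1 h2
          · exact h1
        · intro h; exact ⟨Or.inr h, fun e => hnT (e ▸ hD h)⟩
      have hAS' : insert m C ⊆ S := by
        intro z hz
        rcases Finset.mem_insert.mp hz with h | h
        · exact h ▸ hmS
        · exact Finset.mem_insert_of_mem (Finset.mem_insert_of_mem (hC h))
      have hBS' : insert n D ⊆ S := by
        intro z hz
        rcases Finset.mem_insert.mp hz with h | h
        · exact h ▸ hnS
        · exact Finset.mem_insert_of_mem (Finset.mem_insert_of_mem (hD h))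
      have hd' : Disjoint (insert m C) (insert n D) := by
        rw [Finset.disjoint_insert_right, Finset.disjoint_insert_left]
        refine ⟨?_, ?_, hCD⟩
        · simp only [Finset.mem_insert, not_or]
          exact ⟨fun e => hmn e.symm, fun h => hnT (hC h)⟩
        · exact fun h => hmT' (hD h)
      have hnA' : n ∉ insert m C := by
        simp only [Finset.mem_insert, not_or]
        exact ⟨fun e => hmn (e.symm), fun h => hnT (hC h)⟩
      have hnB' : n ∈ insert n D := Finset.mem_insert_self _ _
      have hmA' : m ∈ insert m C := Finset.mem_insert_self _ _
      have hmB' : m ∉ insert n D := by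
        simp only [Finset.mem_insert, not_or]
        exact ⟨hmn, fun h => hmT' (hD h)⟩
      have hk0 := key S (insert m C) (insert n D) hAS' hBS' hd' m n hmS hnS hmn
      simp only [keyT, dif_neg hnA', dif_neg hmB'] at hk0
      rw [add_zero, sub_zero, sub_eq_zero] at hk0
      rw [nf_BA_t1 N α ω φ hφoff hφdiag S (insert m C) (insert n D) m n
          hAS' hBS' hd' hmS hnS hmn hnA' hnB' hmA' hmB',
        nf_BA_t2 N α ω φ hφoff hφdiag S (insert m C) (insert n D) m n
          hAS' hBS' hd' hmS hnS hmn hnA' hnB' hmA' hmB'] at hk0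
      have hk1 := (conj_inj N _ _ _ _).mp hk0
      exact A3_transport N ω hT1 hC1 hD1 _ _ _ hC hD hCD hk1
    · -- CondBc
      rw [condBc_iff N α]
      intro S A B j i hA hB hAB hjB hiS hiA hiB
      have hj : j ∈ S := hB hjB
      have hji : j ≠ i := fun e => hiB (e ▸ hjB)
      have hk0 := key S A B hA hB hAB j i hj hiS hji
      simp only [keyT, dif_neg hiA, dif_pos hjB] at hk0
      rw [add_zero, sub_zero, sub_eq_zero] at hk0
      rw [nf_NB_t1 N α ω φ hφoff hφdiag S A B j i hA hB hAB hj hiS hji hiA hiB hjB,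
        nf_NB_t3 N α ω φ hφoff hφdiag S A B j i hA hB hAB hj hiS hji hiA hiB hjB]
        at hk0
      exact (conj_inj N _ _ _ _).mp hk0
    · -- CondCc
      rw [condCc_iff N α ω]
      intro S A B j hA hB hAB hjB
      obtain ⟨n, hnS⟩ := Infinite.exists_notMem_finset S
      have hS' : insert n S \ {n} = S := by
        ext z; simp only [Finset.mem_sdiff, Finset.mem_insert, Finset.mem_singleton]
        constructor
        · rintro ⟨h1 | h1, h2⟩
          · exact absurd h1 h2
          · exact h1
        · intro h; exact ⟨Or.inr h, fun e => hnS (e ▸ h)⟩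
      have hB' : insert n B \ {n} = B := by
        ext z; simp only [Finset.mem_sdiff, Finset.mem_insert, Finset.mem_singleton]
        constructor
        · rintro ⟨h1 | h1, h2⟩
          · exact absurd h1 h2
          · exact h1
        · intro h; exact ⟨Or.inr h, fun e => hnS (e ▸ hB h)⟩
      have hAS' : A ⊆ insert n S := hA.trans (Finset.subset_insert _ _)
      have hBS' : insert n B ⊆ insert n S := Finset.insert_subset_insert _ hB
      have hnA : n ∉ A := fun h => hnS (hA h)
      have hd' : Disjoint A (insert n B) := by
        rw [Finset.disjoint_insert_right]
        exact ⟨hnA, hAB⟩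
      have hjS' : j ∈ insert n S := Finset.mem_insert_of_mem (hB hjB)
      have hnS' : n ∈ insert n S := Finset.mem_insert_self _ _
      have hjn : j ≠ n := fun e => hnS (e ▸ hB hjB)
      have hjA : j ∉ A := Finset.disjoint_right.mp hAB hjB
      have hnB' : n ∈ insert n B := Finset.mem_insert_self _ _
      have hjB' : j ∈ insert n B := Finset.mem_insert_of_mem hjB
      have hk0 := key (insert n S) A (insert n B) hAS' hBS' hd' j n hjS' hnS' hjn
      simp only [keyT, dif_neg hnA, dif_pos hjB'] at hk0
      rw [add_zero, sub_zero, sub_eq_zero] at hk0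
      rw [nf_BB_t1 N α ω φ hφoff hφdiag (insert n S) A (insert n B) j n
          hAS' hBS' hd' hjS' hnS' hjn hnA hnB' hjA hjB',
        nf_BB_t3 N α ω φ hφoff hφdiag (insert n S) A (insert n B) j n
          hAS' hBS' hd' hjS' hnS' hjn hnA hnB' hjA hjB'] at hk0
      have hk1 := (conj_inj N _ _ _ _).mp hk0
      exact Cc_transport N α ω hS' rfl hB' _ _ _ _ hA hB hAB hjB hk1
  · rintro ⟨hA1, hA2, hA3, hBc, hCc⟩ S
    apply LinearMap.ext; intro z
    refine DirectSum.induction_on z ?_ (fun p x => ?_) (fun u v hu hv => ?_)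
    · exact (map_zero _).trans (map_zero _).symm
    · obtain ⟨⟨A, B⟩, hAS, hBS, hd⟩ := p
      refine pp_ext N (fun r => ?_)
      obtain ⟨⟨j, i⟩, hj, hi, hji⟩ := r
      erw [LinearMap.sub_apply, LinearMap.sub_apply, map_sub, map_sub]
      simp only [LinearMap.comp_apply]
      rw [show (DirectSum.of (fun p : ιN2 S => N.M (S \ (p.1.1 ∪ p.1.2)))
            ⟨(A, B), hAS, hBS, hd⟩ x) =
          DirectSum.lof k (ιN2 S) (fun p => N.M (S \ (p.1.1 ∪ p.1.2)))
            ⟨(A, B), hAS, hBS, hd⟩ x from rfl]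
      erw [vu_component N φ S A B j i hAS hBS hd hj hi hji x,
        v'u'_component N φ S A B j i hAS hBS hd hj hi hji x,
        v'w_component N φ S A B j i hAS hBS hd hj hi hji x,
        sigma_component N φ S A B j i hAS hBS hd hj hi hji x]
      by_cases hiA : i ∈ A <;> by_cases hjB : j ∈ B
      · rw [dif_pos hiA, dif_pos hjB, dif_pos hjB, dif_pos hiA,
          nf_AB N α ω φ hφoff hφdiag S A B j i hAS hBS hd hj hi hji hiA hjB]
        simp
      · have hiB : i ∉ B := Finset.disjoint_left.mp hd hiA
        by_cases hjA : j ∈ A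
        · have hcc := (condCc_iff N α ω).mp hCc (S \ {j}) B (A \ {j}) i
            (Finset.subset_sdiff.mpr ⟨hBS, Finset.disjoint_singleton_right.mpr hjB⟩)
            (Finset.sdiff_subset_sdiff hAS (Finset.Subset.refl _))
            (Disjoint.mono_right Finset.sdiff_subset hd.symm)
            (Finset.mem_sdiff.mpr ⟨hiA, by simp [Ne.symm hji]⟩)
          rw [dif_pos hiA, dif_neg hjB, dif_neg hjB, dif_pos hiA,
            nf_AA_t2 N α ω φ hφoff hφdiag S A B j i hAS hBS hd hj hi hji hiA hiB hjA hjB,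
            nf_AA_t4 N α ω φ hφoff hφdiag S A B j i hAS hBS hd hj hi hji hiA hiB hjA hjB,
            hcc]
        · have hbc := (condBc_iff N α).mp hBc S B A i j hBS hAS hd.symm hiA hj hjB hjA
          rw [dif_pos hiA, dif_neg hjB, dif_neg hjB, dif_pos hiA,
            nf_AN_t2 N α ω φ hφoff hφdiag S A B j i hAS hBS hd hj hi hji hiA hjA hjB,
            nf_AN_t4 N α ω φ hφoff hφdiag S A B j i hAS hBS hd hj hi hji hiA hjA hjB,
            hbc]
      · have hjA : j ∉ A := Finset.disjoint_right.mp hd hjB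
        by_cases hiB : i ∈ B
        · have hcc := (condCc_iff N α ω).mp hCc (S \ {i}) A (B \ {i}) j
            (Finset.subset_sdiff.mpr ⟨hAS, Finset.disjoint_singleton_right.mpr hiA⟩)
            (Finset.sdiff_subset_sdiff hBS (Finset.Subset.refl _))
            (Disjoint.mono_right Finset.sdiff_subset hd)
            (Finset.mem_sdiff.mpr ⟨hjB, by simp [hji]⟩)
          rw [dif_neg hiA, dif_pos hjB, dif_pos hjB, dif_neg hiA,
            nf_BB_t1 N α ω φ hφoff hφdiag S A B j i hAS hBS hd hj hi hji hiA hiB hjA hjB,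
            nf_BB_t3 N α ω φ hφoff hφdiag S A B j i hAS hBS hd hj hi hji hiA hiB hjA hjB,
            hcc]
        · have hbc := (condBc_iff N α).mp hBc S A B j i hAS hBS hd hjB hi hiA hiB
          rw [dif_neg hiA, dif_pos hjB, dif_pos hjB, dif_neg hiA,
            nf_NB_t1 N α ω φ hφoff hφdiag S A B j i hAS hBS hd hj hi hji hiA hiB hjB,
            nf_NB_t3 N α ω φ hφoff hφdiag S A B j i hAS hBS hd hj hi hji hiA hiB hjB,
            hbc]
      · by_cases hiB : i ∈ B <;> by_cases hjA : j ∈ A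
        · have ha3 := (condA3_iff N ω).mp hA3 ((S \ {i}) \ {j}) (A \ {j}) (B \ {i})
            (by intro z hz
                simp only [Finset.mem_sdiff, Finset.mem_singleton] at hz ⊢
                exact ⟨⟨hAS hz.1, fun h => hiA (h ▸ hz.1)⟩, hz.2⟩)
            (by intro z hz
                simp only [Finset.mem_sdiff, Finset.mem_singleton] at hz ⊢
                exact ⟨⟨hBS hz.1, hz.2⟩, fun h => hjB (h ▸ hz.1)⟩)
            (Disjoint.mono Finset.sdiff_subset Finset.sdiff_subset hd)
          rw [dif_neg hiA, dif_neg hjB, dif_neg hjB, dif_neg hiA,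
            nf_BA_t1 N α ω φ hφoff hφdiag S A B j i hAS hBS hd hj hi hji hiA hiB hjA hjB,
            nf_BA_t2 N α ω φ hφoff hφdiag S A B j i hAS hBS hd hj hi hji hiA hiB hjA hjB,
            ha3]
          simp
        · have ha2 := (condA2_iff N α ω).mp hA2 (S \ {i}) j A (B \ {i})
            (Finset.mem_sdiff.mpr ⟨hj, by simp [hji]⟩)
            (Finset.subset_sdiff.mpr ⟨hAS, Finset.disjoint_singleton_right.mpr hiA⟩)
            (Finset.sdiff_subset_sdiff hBS (Finset.Subset.refl _))
            (Disjoint.mono_right Finset.sdiff_subset hd)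
            hjA (by simp [hjB])
          rw [dif_neg hiA, dif_neg hjB, dif_neg hjB, dif_neg hiA,
            nf_BN_t1 N α ω φ hφoff hφdiag S A B j i hAS hBS hd hj hi hji hiA hiB hjA hjB,
            nf_BN_t2 N α ω φ hφoff hφdiag S A B j i hAS hBS hd hj hi hji hiA hiB hjA hjB,
            ha2]
          simp
        · have ha2 := (condA2_iff N α ω).mp hA2 (S \ {j}) i B (A \ {j})
            (Finset.mem_sdiff.mpr ⟨hi, by simp [Ne.symm hji]⟩)
            (Finset.subset_sdiff.mpr ⟨hBS, Finset.disjoint_singleton_right.mpr hjB⟩)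
            (Finset.sdiff_subset_sdiff hAS (Finset.Subset.refl _))
            (Disjoint.mono_right Finset.sdiff_subset hd.symm)
            hiB (by simp [hiA])
          rw [dif_neg hiA, dif_neg hjB, dif_neg hjB, dif_neg hiA,
            nf_NA_t1 N α ω φ hφoff hφdiag S A B j i hAS hBS hd hj hi hji hiA hiB hjA hjB,
            nf_NA_t2 N α ω φ hφoff hφdiag S A B j i hAS hBS hd hj hi hji hiA hiB hjA hjB,
            ha2]
          simp
        · have ha1 := (condA1_iff N α).mp hA1 S j i A B hj hi hji hAS hBS hd hjA hjB hiA hiB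
          rw [dif_neg hiA, dif_neg hjB, dif_neg hjB, dif_neg hiA,
            nf_NN_t1 N α ω φ hφoff hφdiag S A B j i hAS hBS hd hj hi hji hiA hiB hjA hjB,
            nf_NN_t2 N α ω φ hφoff hφdiag S A B j i hAS hBS hd hj hi hji hiA hiB hjA hjB,
            ha1]
          simp
    · exact (map_add _ u v).trans ((congrArg₂ (· + ·) hu hv).trans (map_add _ u v).symm)

end Stmt16
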